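/- arXiv:2307.13257 — 8 statements merged into one kernel-verified Lean document; each statement's English description precedes it below -/
import Mathlib

section
/- Any multiset of affine hyperplanes in ℝ^d that covers every point of the triangular grid T_d(n) = {x ∈ ℤ_{≥0}^d : x_1 + ⋯ + x_d ≤ n−1} at least once has cardinality at least n. -/
open scoped Classical

/-- The triangular grid `T_d(n)`. -/
def TriGrid (d n : ℕ) : Set (Fin d → ℤ) :=
  {x | (∀ i, 0 ≤ x i) ∧ (∑ i, x i) ≤ (n : ℤ) - 1}

/-- Cast an integer point to a real point. -/
def toReal {d : ℕ} (x : Fin d → ℤ) : Fin d → ℝ := fun i => (x i : ℝ)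

/-- Number of hyperplanes (with multiplicity) of the multiset `C` passing through `p`.
A hyperplane is encoded as a pair `(a, b)` with `a ≠ 0`, representing `{p | ∑ i, a i * p i = b}`. -/
noncomputable def hypCount (d : ℕ) (C : Multiset ((Fin d → ℝ) × ℝ)) (p : Fin d → ℝ) : ℕ :=
  Multiset.countP (fun H => ∑ i, H.1 i * p i = H.2) C

lemma zero_mem_grid (d n : ℕ) (hn : 1 ≤ n) : (0 : Fin d → ℤ) ∈ TriGrid d n := by
  constructor
  · intro i; simp
  · simp only [Pi.zero_apply, Finset.sum_const_zero]
    omega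

lemma sum_shift {e : ℕ} (a : Fin (e+1) → ℝ) (y : Fin (e+1) → ℤ) :
    (∑ i, a i * (((y i + if i = Fin.last e then 1 else 0) : ℤ) : ℝ))
      = (∑ i, a i * (y i : ℝ)) + a (Fin.last e) := by
  have h : ∀ i : Fin (e+1), a i * (((y i + if i = Fin.last e then 1 else 0) : ℤ) : ℝ)
      = a i * (y i : ℝ) + (if i = Fin.last e then a i else 0) := by
    intro i; split_ifs with h <;> push_cast <;> ring
  rw [Finset.sum_congr rfl fun i _ => h i, Finset.sum_add_distrib]
  simp

lemma key : ∀ m d n, d + n ≤ m → 1 ≤ d → 1 ≤ n →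
    ∀ C : Multiset ((Fin d → ℝ) × ℝ),
    (∀ H ∈ C, H.1 ≠ 0) →
    (∀ x ∈ TriGrid d n, 1 ≤ hypCount d C (toReal x)) →
    n ≤ Multiset.card C := by
  intro m
  induction m with
  | zero => intro d n h hd hn; omega
  | succ m IH =>
    intro d n hm hd hn C hC hcov
    rcases Nat.lt_or_ge n 2 with hn1 | hn2
    · -- n = 1 : the origin must be covered
      have hne : n = 1 := by omega
      have h0 := hcov 0 (zero_mem_grid d n hn)
      unfold hypCount at h0
      calc n = 1 := hne
        _ ≤ _ := le_trans h0 (Multiset.countP_le_card _ C)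
    · obtain ⟨e, rfl⟩ : ∃ e, d = e + 1 := ⟨d - 1, by omega⟩
      by_cases hA : ∃ H ∈ C, (∀ i, i ≠ Fin.last e → H.1 i = 0) ∧ H.2 = 0
      · -- Case A: some hyperplane is {x_last = 0}; shift to reduce n.
        obtain ⟨H, hHC, hHz, hHb⟩ := hA
        have halast : H.1 (Fin.last e) ≠ 0 := by
          intro h
          apply hC H hHC
          funext i
          by_cases hi : i = Fin.last e
          · rw [hi]; exact h
          · exact hHz i hi
        set f : ((Fin (e+1) → ℝ) × ℝ) → ((Fin (e+1) → ℝ) × ℝ) :=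
          fun G => (G.1, G.2 - G.1 (Fin.last e)) with hf
        set C' := (C.erase H).map f with hC'def
        have hC' : ∀ G ∈ C', G.1 ≠ 0 := by
          intro G hG
          obtain ⟨G', hG', rfl⟩ := Multiset.mem_map.mp hG
          exact hC G' (Multiset.mem_of_mem_erase hG')
        have hcov' : ∀ y ∈ TriGrid (e+1) (n-1), 1 ≤ hypCount (e+1) C' (toReal y) := by
          intro y hy
          set x : Fin (e+1) → ℤ := fun i => y i + if i = Fin.last e then 1 else 0 with hxdef
          have hx : x ∈ TriGrid (e+1) n := by
            constructor
            · intro i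
              have := hy.1 i
              simp only [hxdef]
              split_ifs <;> omega
            · have hsy : (∑ i, y i) ≤ ((n-1 : ℕ) : ℤ) - 1 := hy.2
              have hcast : ((n-1 : ℕ) : ℤ) = (n : ℤ) - 1 := by omega
              have : (∑ i, x i) = (∑ i, y i) + 1 := by
                simp only [hxdef, Finset.sum_add_distrib]
                congr 1
                simp
              omega
          have h1 := hcov x hx
          unfold hypCount at h1 ⊢
          have hpH : ¬ (∑ i, H.1 i * (toReal x) i = H.2) := by
            have hsum : (∑ i, H.1 i * (toReal x) i) = H.1 (Fin.last e) * (toReal x) (Fin.last e) := by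
              apply Finset.sum_eq_single
              · intro b _ hb
                rw [hHz b hb, zero_mul]
              · intro h; exact absurd (Finset.mem_univ _) h
            rw [hsum, hHb]
            have hxl : (toReal x) (Fin.last e) = (y (Fin.last e) : ℝ) + 1 := by
              simp [toReal, hxdef]
            have hylpos : (0:ℝ) < (y (Fin.last e) : ℝ) + 1 := by
              have := hy.1 (Fin.last e)
              have : (0:ℝ) ≤ (y (Fin.last e) : ℝ) := by exact_mod_cast this
              linarith
            rw [hxl]
            exact mul_ne_zero halast (by linarith)
          have h2 : 0 < Multiset.countP (fun H => ∑ i, H.1 i * (toReal x) i = H.2) (C.erase H) := by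
            have := Multiset.cons_erase hHC
            rw [← this, Multiset.countP_cons] at h1
            exact (by simpa [hpH] using h1 : 1 ≤ _)
          obtain ⟨G, hG, hpG⟩ := Multiset.countP_pos.mp h2
          apply Multiset.countP_pos.mpr
          refine ⟨f G, Multiset.mem_map_of_mem f hG, ?_⟩
          have := sum_shift G.1 y
          simp only [hxdef, toReal] at hpG ⊢
          rw [this] at hpG
          show (∑ i, G.1 i * ((y i : ℤ) : ℝ)) = G.2 - G.1 (Fin.last e)
          linarith
        have hrec := IH (e+1) (n-1) (by omega) (by omega) (by omega) C' hC' hcov'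
        have hcard : Multiset.card C' = Multiset.card C - 1 := by
          rw [hC'def, Multiset.card_map, Multiset.card_erase_of_mem hHC]
          exact Nat.pred_eq_sub_one
        have hpos : 0 < Multiset.card C :=
          Multiset.card_pos.mpr (fun h => by simp [h] at hHC)
        omega
      · -- Case B: no hyperplane equals {x_last = 0}; restrict to the facet.
        push_neg at hA
        rcases Nat.eq_zero_or_pos e with he | he
        · -- d = 1 : the origin forces a hyperplane with b = 0, contradiction
          subst he
          exfalso
          have h0 := hcov 0 (zero_mem_grid 1 n hn)
          unfold hypCount at h0
          obtain ⟨H, hH, hpH⟩ := Multiset.countP_pos.mp h0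
          have hb : H.2 = 0 := by
            simpa [toReal] using hpH.symm
          refine hA H hH ?_ hb
          intro i hi
          exact absurd (Subsingleton.elim (α := Fin 1) i (Fin.last 0)) hi
        · set P : ((Fin (e+1) → ℝ) × ℝ) → Prop :=
            fun G => (fun i : Fin e => G.1 i.castSucc) ≠ 0 with hP
          set g : ((Fin (e+1) → ℝ) × ℝ) → ((Fin e → ℝ) × ℝ) :=
            fun G => ((fun i : Fin e => G.1 i.castSucc), G.2) with hg
          set C'' := (C.filter P).map g with hC''def
          have hC'' : ∀ G ∈ C'', G.1 ≠ 0 := by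
            intro G hG
            obtain ⟨G', hG', rfl⟩ := Multiset.mem_map.mp hG
            exact (Multiset.mem_filter.mp hG').2
          have hcov'' : ∀ y ∈ TriGrid e n, 1 ≤ hypCount e C'' (toReal y) := by
            intro y hy
            set x : Fin (e+1) → ℤ := Fin.snoc y 0 with hxdef
            have hx : x ∈ TriGrid (e+1) n := by
              constructor
              · intro i
                refine Fin.lastCases ?_ ?_ i
                · simp [hxdef]
                · intro j; simpa [hxdef] using hy.1 j
              · rw [Fin.sum_univ_castSucc]
                simpa [hxdef] using hy.2
            have h1 := hcov x hx
            unfold hypCount at h1 ⊢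
            obtain ⟨H, hH, hpH⟩ := Multiset.countP_pos.mp h1
            have hsum : (∑ i : Fin e, H.1 i.castSucc * (y i : ℝ)) = H.2 := by
              rw [Fin.sum_univ_castSucc] at hpH
              simpa [toReal, hxdef] using hpH
            have hPH : P H := by
              intro hz
              have hz' : ∀ i : Fin e, H.1 i.castSucc = 0 := fun i => congrFun hz i
              have hzb : H.2 = 0 := by
                rw [← hsum]
                simp [hz']
              refine hA H hH ?_ hzb
              intro i hi
              obtain ⟨j, rfl⟩ := Fin.exists_castSucc_eq.mpr hi
              exact hz' j
            apply Multiset.countP_pos.mpr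
            refine ⟨g H, Multiset.mem_map_of_mem g (Multiset.mem_filter.mpr ⟨hH, hPH⟩), ?_⟩
            simpa [hg, toReal] using hsum
          have hrec := IH e n (by omega) he hn C'' hC'' hcov''
          have hcard : Multiset.card C'' ≤ Multiset.card C := by
            rw [hC''def, Multiset.card_map]
            exact Multiset.card_le_card (Multiset.filter_le P C)
          omega

theorem stmt0 (d n : ℕ) (hd : 1 ≤ d) (hn : 1 ≤ n)
    (C : Multiset ((Fin d → ℝ) × ℝ))
    (hC : ∀ H ∈ C, H.1 ≠ 0)
    (hcov : ∀ x ∈ TriGrid d n, 1 ≤ hypCount d C (toReal x)) :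
    n ≤ Multiset.card C := by
  exact key (d + n) d n le_rfl hd hn C hC hcov
end

section
/- For every n ≥ 1 and d ≥ 1, there exists a multiset of exactly n affine hyperplanes in ℝ^d covering every point of T_d(n) at least once; consequently the minimum size of a cover of T_d(n) is exactly n. -/
open scoped Classical

lemma hypCount_pos_iff (d : ℕ) (C : Multiset ((Fin d → ℝ) × ℝ)) (p : Fin d → ℝ) :
    1 ≤ hypCount d C p ↔ ∃ H ∈ C, ∑ i, H.1 i * p i = H.2 := by
  rw [hypCount, show (1 ≤ Multiset.countP (fun H => ∑ i, H.1 i * p i = H.2) C) ↔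
    0 < Multiset.countP (fun H => ∑ i, H.1 i * p i = H.2) C from Iff.rfl,
    Multiset.countP_pos]

lemma lower_bound : ∀ n d (C : Multiset ((Fin (d+1) → ℝ) × ℝ)),
    (∀ H ∈ C, H.1 ≠ 0) →
    (∀ x ∈ TriGrid (d+1) n, 1 ≤ hypCount (d+1) C (toReal x)) →
    n ≤ Multiset.card C := by
  intro n
  induction n with
  | zero => intro d C _ _; exact Nat.zero_le _
  | succ n ihn =>
    intro d
    induction d with
    | zero =>
      intro C hC hcov
      -- base case d = 1: each hyperplane covers at most one point of {0,…,n}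
      have key : ∀ k : Fin (n+1), ∃ H ∈ C, H.1 0 * (k : ℝ) = H.2 := by
        intro k
        have hx : (fun _ : Fin 1 => (k : ℤ)) ∈ TriGrid 1 (n+1) := by
          constructor
          · intro i; exact Int.ofNat_nonneg k
          · simp only [Fin.sum_univ_one]
            have := k.isLt
            push_cast
            omega
        obtain ⟨H, hH, hHc⟩ := (hypCount_pos_iff _ _ _).mp (hcov _ hx)
        exact ⟨H, hH, by simpa [toReal, Fin.sum_univ_one] using hHc⟩
      choose f hf1 hf2 using key
      have hinj : Function.Injective f := by
        intro k k' hkk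
        have h1 := hf2 k
        have h2 := hf2 k'
        rw [hkk] at h1
        have ha : (f k').1 0 ≠ 0 := by
          intro h0
          apply hC _ (hf1 k')
          funext i
          have : i = 0 := Fin.fin_one_eq_zero i
          rw [this, h0]; rfl
        have : (k : ℝ) = (k' : ℝ) := by
          have := h1.trans h2.symm
          exact mul_left_cancel₀ ha this
        exact Fin.ext (by exact_mod_cast this)
      calc n + 1 = (Finset.univ : Finset (Fin (n+1))).card := by simp
        _ ≤ C.toFinset.card := Finset.card_le_card_of_injOn f
            (fun k _ => Multiset.mem_toFinset.mpr (hf1 k)) hinj.injOn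
        _ ≤ Multiset.card C := Multiset.toFinset_card_le C
    | succ d ihd =>
      intro C hC hcov
      set L : Fin (d+2) := Fin.last (d+1) with hL
      -- the shifted grid: y + e_L for y ∈ T_{d+2}(n)
      by_cases hcase : ∃ H ∈ C, ∀ y ∈ TriGrid (d+2) n,
          ¬ (∑ i, H.1 i * (toReal y i + (if i = L then 1 else 0)) = H.2)
      · -- Case 1: some hyperplane misses the whole shifted grid; remove it, translate
        obtain ⟨H0, hH0, hmiss⟩ := hcase
        set C' := (C.erase H0).map (fun K => (K.1, K.2 - K.1 L)) with hC'
        have hvalid : ∀ K ∈ C', K.1 ≠ 0 := by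
          intro K hK
          obtain ⟨K0, hK0, rfl⟩ := Multiset.mem_map.mp hK
          exact hC K0 (Multiset.mem_of_mem_erase hK0)
        have hcov' : ∀ y ∈ TriGrid (d+2) n, 1 ≤ hypCount (d+2) C' (toReal y) := by
          intro y hy
          set x : Fin (d+2) → ℤ := fun i => y i + (if i = L then 1 else 0) with hxdef
          have hx : x ∈ TriGrid (d+2) (n+1) := by
            constructor
            · intro i
              have h1 := hy.1 i
              simp only [hxdef]
              split <;> omega
            · have hsum : ∑ i, x i = (∑ i, y i) + 1 := by
                simp [hxdef, Finset.sum_add_distrib]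
              have := hy.2
              push_cast
              omega
          obtain ⟨K, hK, hKc⟩ := (hypCount_pos_iff _ _ _).mp (hcov _ hx)
          have hKcov : ∑ i, K.1 i * (toReal y i + (if i = L then 1 else 0)) = K.2 := by
            convert hKc using 2 with i
            by_cases h : i = L <;> simp [toReal, hxdef, h]
          have hKne : K ≠ H0 := by
            intro h; exact hmiss y hy (h ▸ hKcov)
          apply (hypCount_pos_iff _ _ _).mpr
          refine ⟨(K.1, K.2 - K.1 L), Multiset.mem_map.mpr
            ⟨K, (Multiset.mem_erase_of_ne hKne).mpr hK, rfl⟩, ?_⟩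
          have hexp : ∑ i, K.1 i * (toReal y i + (if i = L then 1 else 0))
              = (∑ i, K.1 i * toReal y i) + K.1 L := by
            simp [mul_add, mul_ite, Finset.sum_add_distrib, Finset.sum_ite_eq']
          simp only
          rw [hexp] at hKcov
          linarith
        have hn' := ihn (d+1) C' hvalid hcov'
        have hcard : Multiset.card C' = Multiset.card C - 1 := by
          rw [hC', Multiset.card_map, Multiset.card_erase_of_mem hH0]
          rfl
        have hpos : 0 < Multiset.card C := Multiset.card_pos_iff_exists_mem.mpr ⟨H0, hH0⟩
        omega
      · -- Case 2: every hyperplane meets the shifted grid; restrict to the face x_L = 0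
        push_neg at hcase
        set C'' := (C.filter (fun H => ∃ i : Fin (d+1), H.1 i.castSucc ≠ 0)).map
            (fun H => ((fun i : Fin (d+1) => H.1 i.castSucc), H.2)) with hC''
        have hvalid : ∀ K ∈ C'', K.1 ≠ 0 := by
          intro K hK
          obtain ⟨K0, hK0, rfl⟩ := Multiset.mem_map.mp hK
          obtain ⟨i, hi⟩ := (Multiset.mem_filter.mp hK0).2
          intro h0
          exact hi (congrFun h0 i)
        have hcov'' : ∀ y ∈ TriGrid (d+1) (n+1), 1 ≤ hypCount (d+1) C'' (toReal y) := by
          intro y hy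
          set x : Fin (d+2) → ℤ := Fin.snoc y 0 with hxdef
          have hx : x ∈ TriGrid (d+2) (n+1) := by
            constructor
            · intro i
              refine Fin.lastCases ?_ ?_ i
              · simp [hxdef]
              · intro j; simpa [hxdef] using hy.1 j
            · rw [Fin.sum_univ_castSucc]
              simpa [hxdef] using hy.2
          obtain ⟨K, hK, hKc⟩ := (hypCount_pos_iff _ _ _).mp (hcov _ hx)
          -- split the covering sum
          have hsplit : ∑ i, K.1 i * toReal x i
              = (∑ i : Fin (d+1), K.1 i.castSucc * toReal y i) + K.1 L * 0 := by
            rw [Fin.sum_univ_castSucc]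
            simp [toReal, hxdef, hL]
          have hKfilt : ∃ i : Fin (d+1), K.1 i.castSucc ≠ 0 := by
            by_contra hall
            push_neg at hall
            have hb : K.2 = 0 := by
              rw [← hKc, hsplit]
              simp [hall]
            have haL : K.1 L ≠ 0 := by
              intro h0
              apply hC K hK
              funext i
              refine Fin.lastCases ?_ ?_ i
              · exact h0
              · exact hall
            obtain ⟨y', hy', hcov'⟩ := hcase K hK
            have : ∑ i, K.1 i * (toReal y' i + (if i = L then 1 else 0))
                = K.1 L * (toReal y' L + 1) := by
              rw [Fin.sum_univ_castSucc]
              have : ∀ j : Fin (d+1), (j.castSucc : Fin (d+2)) ≠ L := by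
                intro j; simp [hL]
              simp [hall, this, hL]
            rw [hcov', hb] at this
            have hyL : (0 : ℝ) ≤ toReal y' L := by
              simp only [toReal]
              exact_mod_cast hy'.1 L
            exact (mul_ne_zero haL (by linarith)) this.symm
          apply (hypCount_pos_iff _ _ _).mpr
          refine ⟨((fun i : Fin (d+1) => K.1 i.castSucc), K.2), Multiset.mem_map.mpr
            ⟨K, Multiset.mem_filter.mpr ⟨hK, hKfilt⟩, rfl⟩, ?_⟩
          simp only
          rw [← hKc, hsplit]
          ring
        have := ihd C'' hvalid hcov''
        calc n + 1 ≤ Multiset.card C'' := this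
          _ = Multiset.card (C.filter (fun H => ∃ i : Fin (d+1), H.1 i.castSucc ≠ 0)) := by
              rw [hC'', Multiset.card_map]
          _ ≤ Multiset.card C := Multiset.card_le_card (Multiset.filter_le _ _)

theorem stmt1 (d n : ℕ) (hd : 1 ≤ d) (hn : 1 ≤ n) :
    (∃ C : Multiset ((Fin d → ℝ) × ℝ),
      Multiset.card C = n ∧ (∀ H ∈ C, H.1 ≠ 0) ∧
      (∀ x ∈ TriGrid d n, 1 ≤ hypCount d C (toReal x))) ∧
    (∀ C : Multiset ((Fin d → ℝ) × ℝ),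
      (∀ H ∈ C, H.1 ≠ 0) →
      (∀ x ∈ TriGrid d n, 1 ≤ hypCount d C (toReal x)) →
      n ≤ Multiset.card C) := by
  obtain ⟨d, rfl⟩ : ∃ d', d = d' + 1 := ⟨d - 1, by omega⟩
  constructor
  · -- existence: hyperplanes x_0 = i for i = 0, …, n-1
    set a : Fin (d+1) → ℝ := fun j => if j = 0 then 1 else 0 with ha
    refine ⟨(Multiset.range n).map (fun i : ℕ => (a, (i : ℝ))), by simp, ?_, ?_⟩
    · intro H hH
      obtain ⟨i, _, rfl⟩ := Multiset.mem_map.mp hH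
      intro h0
      have : a 0 = 0 := congrFun h0 0
      simp [ha] at this
    · intro x hx
      have hx0 : 0 ≤ x 0 := hx.1 0
      have hx0' : x 0 ≤ (n : ℤ) - 1 := by
        calc x 0 ≤ ∑ i, x i :=
          Finset.single_le_sum (fun i _ => hx.1 i) (Finset.mem_univ 0)
        _ ≤ (n : ℤ) - 1 := hx.2
      have hlt : (x 0).toNat < n := by omega
      have hmem : (a, (((x 0).toNat : ℕ) : ℝ)) ∈
          (Multiset.range n).map (fun i : ℕ => (a, (i : ℝ))) :=
        Multiset.mem_map_of_mem (fun i : ℕ => (a, (i : ℝ))) (Multiset.mem_range.mpr hlt)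
      apply (hypCount_pos_iff _ _ _).mpr
      refine ⟨(a, (((x 0).toNat : ℕ) : ℝ)), hmem, ?_⟩
      simp only
      have hsum : ∑ i, a i * toReal x i = toReal x 0 := by
        simp [ha, ite_mul, Finset.sum_ite_eq']
      rw [hsum]
      show ((x 0 : ℤ) : ℝ) = _
      exact_mod_cast (Int.toNat_of_nonneg hx0).symm
  · intro C hC hcov
    exact lower_bound n d C hC hcov
end

section
/- Any multiset of lines in ℝ² covering every point of T_2(n) at least twice has cardinality at least ⌈3n/2⌉, for all n ≥ 2. -/
open scoped Classical

/- ### Auxiliary development -/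

private lemma ext2 {p q : Fin 2 → ℤ} (h0 : p 0 = q 0) (h1 : p 1 = q 1) : p = q := by
  funext i; fin_cases i <;> assumption

private lemma aext {a : Fin 2 → ℝ} (h0 : a 0 = 0) (h1 : a 1 = 0) : a = 0 := by
  funext i; fin_cases i <;> simpa

/-- side type: the line is one of the three boundary lines (x=0, y=0, x+y=n-1). -/
private def sideT (n : ℕ) (H : (Fin 2 → ℝ) × ℝ) : Prop :=
  (H.1 1 = 0 ∧ H.2 = 0) ∨ (H.1 0 = 0 ∧ H.2 = 0) ∨
    (H.1 0 = H.1 1 ∧ H.2 = H.1 0 * ((n : ℝ) - 1))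

private noncomputable def sA (n : ℕ) : Finset (Fin 2 → ℤ) :=
  (Finset.range n).image fun k : ℕ => ![0, (k:ℤ)]
private noncomputable def sB (n : ℕ) : Finset (Fin 2 → ℤ) :=
  (Finset.range (n-1)).image fun k : ℕ => ![(k:ℤ)+1, 0]
private noncomputable def sC (n : ℕ) : Finset (Fin 2 → ℤ) :=
  (Finset.range (n-2)).image fun k : ℕ => ![(k:ℤ)+1, (n:ℤ)-2-(k:ℤ)]
private noncomputable def bdry (n : ℕ) : Finset (Fin 2 → ℤ) := sA n ∪ sB n ∪ sC n

private lemma mem_sA {n : ℕ} {p : Fin 2 → ℤ} (h : p ∈ sA n) :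
    p 0 = 0 ∧ 0 ≤ p 1 ∧ p 1 ≤ (n:ℤ) - 1 := by
  simp only [sA, Finset.mem_image, Finset.mem_range] at h
  obtain ⟨k, hk, rfl⟩ := h
  simp only [Matrix.cons_val_zero, Matrix.cons_val_one, Matrix.head_cons]
  refine ⟨trivial, by omega, by omega⟩

private lemma mem_sB {n : ℕ} {p : Fin 2 → ℤ} (h : p ∈ sB n) :
    p 1 = 0 ∧ 1 ≤ p 0 ∧ p 0 ≤ (n:ℤ) - 1 := by
  simp only [sB, Finset.mem_image, Finset.mem_range] at h
  obtain ⟨k, hk, rfl⟩ := h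
  simp only [Matrix.cons_val_zero, Matrix.cons_val_one, Matrix.head_cons]
  refine ⟨trivial, by omega, by omega⟩

private lemma mem_sC {n : ℕ} {p : Fin 2 → ℤ} (h : p ∈ sC n) :
    1 ≤ p 0 ∧ 1 ≤ p 1 ∧ p 0 + p 1 = (n:ℤ) - 1 := by
  simp only [sC, Finset.mem_image, Finset.mem_range] at h
  obtain ⟨k, hk, rfl⟩ := h
  simp only [Matrix.cons_val_zero, Matrix.cons_val_one, Matrix.head_cons]
  refine ⟨by omega, by omega, by omega⟩

private lemma cardA (n : ℕ) : (sA n).card = n := by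
  have hinj : Function.Injective (fun k : ℕ => (![0, (k:ℤ)] : Fin 2 → ℤ)) := by
    intro a b hab
    have := congrFun hab 1
    simpa using this
  rw [sA, Finset.card_image_of_injective _ hinj, Finset.card_range]

private lemma cardB (n : ℕ) : (sB n).card = n - 1 := by
  have hinj : Function.Injective (fun k : ℕ => (![(k:ℤ)+1, 0] : Fin 2 → ℤ)) := by
    intro a b hab
    have := congrFun hab 0
    simp only [Matrix.cons_val_zero] at this
    omega
  rw [sB, Finset.card_image_of_injective _ hinj, Finset.card_range]

private lemma cardC (n : ℕ) : (sC n).card = n - 2 := by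
  have hinj : Function.Injective (fun k : ℕ => (![(k:ℤ)+1, (n:ℤ)-2-(k:ℤ)] : Fin 2 → ℤ)) := by
    intro a b hab
    have := congrFun hab 0
    simp only [Matrix.cons_val_zero] at this
    omega
  rw [sC, Finset.card_image_of_injective _ hinj, Finset.card_range]

private lemma card_bdry {n : ℕ} (hn : 2 ≤ n) : (bdry n).card = 3 * n - 3 := by
  have dAB : Disjoint (sA n) (sB n) := by
    rw [Finset.disjoint_left]
    intro p hA hB
    have h1 := mem_sA hA; have h2 := mem_sB hB
    omega
  have dABC : Disjoint (sA n ∪ sB n) (sC n) := by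
    rw [Finset.disjoint_left]
    intro p hAB hC
    have hc := mem_sC hC
    rcases Finset.mem_union.1 hAB with h | h
    · have := mem_sA h; omega
    · have := mem_sB h; omega
  rw [bdry, Finset.card_union_of_disjoint dABC, Finset.card_union_of_disjoint dAB,
    cardA, cardB, cardC]
  omega

private lemma mem_TriGrid {n : ℕ} {x : Fin 2 → ℤ} :
    x ∈ TriGrid 2 n ↔ 0 ≤ x 0 ∧ 0 ≤ x 1 ∧ x 0 + x 1 ≤ (n:ℤ) - 1 := by
  constructor
  · rintro ⟨h1, h2⟩
    rw [Fin.sum_univ_two] at h2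
    exact ⟨h1 0, h1 1, h2⟩
  · rintro ⟨h1, h2, h3⟩
    refine ⟨?_, ?_⟩
    · rw [Fin.forall_fin_two]; exact ⟨h1, h2⟩
    · rw [Fin.sum_univ_two]; exact h3

private lemma bdry_subset {n : ℕ} {p : Fin 2 → ℤ} (h : p ∈ bdry n) : p ∈ TriGrid 2 n := by
  rw [mem_TriGrid]
  rcases Finset.mem_union.1 h with h | h
  · rcases Finset.mem_union.1 h with h | h
    · have := mem_sA h; omega
    · have := mem_sB h; omega
  · have := mem_sC h; omega

/-- Core geometric fact: a line hitting the interiors of the parametrized pieces of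
all three sides would be impossible / forced to be a side line. -/
private lemma core (n : ℕ) (hn : 2 ≤ n) (a0 a1 c : ℝ) (ha : ¬(a0 = 0 ∧ a1 = 0))
    (P Q R : ℤ) (hP0 : 0 ≤ P) (hP1 : P ≤ (n:ℤ)-1) (hQ0 : 1 ≤ Q) (hQ1 : Q ≤ (n:ℤ)-1)
    (hR0 : 1 ≤ R) (hR1 : R ≤ (n:ℤ)-2)
    (e1 : a1 * (P:ℝ) = c) (e2 : a0 * (Q:ℝ) = c)
    (e3 : a0 * (R:ℝ) + a1 * ((n:ℝ)-1-(R:ℝ)) = c) :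
    (a1 = 0 ∧ c = 0) ∨ (a0 = 0 ∧ c = 0) ∨ (a0 = a1 ∧ c = a0 * ((n:ℝ)-1)) := by
  have hQne : (Q:ℝ) ≠ 0 := by exact_mod_cast (by omega : Q ≠ 0)
  have hRne : (R:ℝ) ≠ 0 := by exact_mod_cast (by omega : R ≠ 0)
  have hSne : (n:ℝ) - 1 - (R:ℝ) ≠ 0 := by
    have h1 : R ≠ (n:ℤ) - 1 := by omega
    intro h
    apply h1
    have h2 : (R:ℝ) = (((n:ℤ) - 1 : ℤ) : ℝ) := by push_cast; linarith
    exact_mod_cast h2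
  by_cases hP : P = 0
  · subst hP
    have hc : c = 0 := by simpa using e1.symm
    have ha0 : a0 = 0 := by
      rcases mul_eq_zero.1 (by rw [hc] at e2; exact e2) with h | h
      · exact h
      · exact absurd h hQne
    exact Or.inr (Or.inl ⟨ha0, hc⟩)
  by_cases hPn : P = (n:ℤ) - 1
  · subst hPn
    have e1' : a1 * ((n:ℝ) - 1) = c := by push_cast at e1 ⊢; linarith
    have key : (a0 - a1) * (R:ℝ) = 0 := by linear_combination e3 - e1'
    rcases mul_eq_zero.1 key with h | h
    · have h01 : a0 = a1 := by linarith
      exact Or.inr (Or.inr ⟨h01, by rw [h01]; linarith⟩)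
    · exact absurd h hRne
  by_cases hQn : Q = (n:ℤ) - 1
  · subst hQn
    have e2' : a0 * ((n:ℝ) - 1) = c := by push_cast at e2 ⊢; linarith
    have key : (a1 - a0) * ((n:ℝ) - 1 - (R:ℝ)) = 0 := by linear_combination e3 - e2'
    rcases mul_eq_zero.1 key with h | h
    · have h01 : a0 = a1 := by linarith
      exact Or.inr (Or.inr ⟨h01, by linarith⟩)
    · exact absurd h hSne
  -- now 1 ≤ P ≤ n-2, 1 ≤ Q ≤ n-2
  exfalso
  have hPne : (P:ℝ) ≠ 0 := by exact_mod_cast (by omega : P ≠ 0)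
  have hc : c ≠ 0 := by
    intro h0
    rw [h0] at e1 e2
    apply ha
    constructor
    · rcases mul_eq_zero.1 e2 with h | h
      · exact h
      · exact absurd h hQne
    · rcases mul_eq_zero.1 e1 with h | h
      · exact h
      · exact absurd h hPne
  have key : c * ((P:ℝ)*(R:ℝ) + (Q:ℝ)*((n:ℝ)-1-(R:ℝ)) - (P:ℝ)*(Q:ℝ)) = 0 := by
    linear_combination (-((P:ℝ)*(R:ℝ)))*e2 - ((Q:ℝ)*((n:ℝ)-1-(R:ℝ)))*e1 + ((P:ℝ)*(Q:ℝ))*e3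
  have keyR : (P:ℝ)*(R:ℝ) + (Q:ℝ)*((n:ℝ)-1-(R:ℝ)) - (P:ℝ)*(Q:ℝ) = 0 := by
    rcases mul_eq_zero.1 key with h | h
    · exact absurd h hc
    · exact h
  have keyZ : P*R + Q*((n:ℤ)-1-R) = P*Q := by
    have : ((P*R + Q*((n:ℤ)-1-R) : ℤ) : ℝ) = ((P*Q : ℤ) : ℝ) := by push_cast; linarith
    exact_mod_cast this
  -- integer contradiction
  set S : ℤ := (n:ℤ) - 1 - R with hS
  have hS1 : 1 ≤ S := by omega
  have hRS : R + S = (n:ℤ) - 1 := by omega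
  have hP2 : P ≤ (n:ℤ) - 2 := by omega
  have hQ2 : Q ≤ (n:ℤ) - 2 := by omega
  have hP1' : 1 ≤ P := by omega
  rcases le_total P Q with hPQ | hQP
  · have h1 : P*S ≤ Q*S := mul_le_mul_of_nonneg_right hPQ (by omega)
    have h2 : P*R + P*S = P*((n:ℤ)-1) := by rw [← mul_add, hRS]
    have h3 : P*(Q+1) ≤ P*((n:ℤ)-1) :=
      mul_le_mul_of_nonneg_left (by omega) (by omega)
    have h4 : P*(Q+1) = P*Q + P := by ring
    linarith
  · have h1 : Q*R ≤ P*R := mul_le_mul_of_nonneg_right hQP (by omega)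
    have h2 : Q*R + Q*S = Q*((n:ℤ)-1) := by rw [← mul_add, hRS]
    have h3 : Q*(P+1) ≤ Q*((n:ℤ)-1) :=
      mul_le_mul_of_nonneg_left (by omega) (by omega)
    have h4 : Q*(P+1) = Q*P + Q := by ring
    have h5 : Q*P = P*Q := by ring
    linarith


private lemma line_card_le (n : ℕ) (hn : 2 ≤ n) (a : Fin 2 → ℝ) (c : ℝ) (ha : a ≠ 0) :
    ((bdry n).filter (fun p => ∑ i, a i * toReal p i = c)).card
      ≤ if sideT n (a, c) then n else 2 := by
  have ha' : ¬(a 0 = 0 ∧ a 1 = 0) := fun h => ha (aext h.1 h.2)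
  have hsum : ∀ p : Fin 2 → ℤ, (∑ i, a i * toReal p i = c) ↔
      (a 0 * ((p 0 : ℝ)) + a 1 * ((p 1 : ℝ)) = c) := by
    intro p; simp [toReal, Fin.sum_univ_two]
  have eqA : ∀ p ∈ sA n, (∑ i, a i * toReal p i = c) → a 1 * (p 1 : ℝ) = c := by
    intro p hp hF
    have hm := mem_sA hp
    have h := (hsum p).1 hF
    have h0 : ((p 0 : ℝ)) = 0 := by exact_mod_cast hm.1
    rw [h0] at h; linarith
  have eqB : ∀ p ∈ sB n, (∑ i, a i * toReal p i = c) → a 0 * (p 0 : ℝ) = c := by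
    intro p hp hF
    have hm := mem_sB hp
    have h := (hsum p).1 hF
    have h1 : ((p 1 : ℝ)) = 0 := by exact_mod_cast hm.1
    rw [h1] at h; linarith
  have eqC : ∀ p ∈ sC n, (∑ i, a i * toReal p i = c) →
      a 0 * (p 0 : ℝ) + a 1 * ((n:ℝ) - 1 - (p 0 : ℝ)) = c := by
    intro p hp hF
    have hm := mem_sC hp
    have h := (hsum p).1 hF
    have hpq : (p 0 : ℝ) + (p 1 : ℝ) = (n:ℝ) - 1 := by exact_mod_cast hm.2.2
    linear_combination h - a 1 * hpq
  rw [bdry, Finset.filter_union, Finset.filter_union]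
  refine le_trans (le_trans (Finset.card_union_le _ _)
    (Nat.add_le_add_right (Finset.card_union_le _ _) _)) ?_
  by_cases hside : sideT n (a, c)
  · rw [if_pos hside]
    rcases hside with ⟨h1, h0⟩ | ⟨h1, h0⟩ | ⟨h01, hc0⟩
    · replace h1 : a 1 = 0 := h1
      replace h0 : c = 0 := h0
      have ha0 : a 0 ≠ 0 := fun h => ha' ⟨h, h1⟩
      have hA : ((sA n).filter (fun p => ∑ i, a i * toReal p i = c)).card ≤ n :=
        le_trans (Finset.card_filter_le _ _) (le_of_eq (cardA n))
      have hB : ((sB n).filter (fun p => ∑ i, a i * toReal p i = c)).card = 0 := by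
        rw [Finset.card_eq_zero, Finset.filter_eq_empty_iff]
        intro p hp hF
        have hm := mem_sB hp
        have h := eqB p hp hF
        rw [h0] at h
        rcases mul_eq_zero.1 h with h' | h'
        · exact ha0 h'
        · have : p 0 = 0 := by exact_mod_cast h'
          omega
      have hC : ((sC n).filter (fun p => ∑ i, a i * toReal p i = c)).card = 0 := by
        rw [Finset.card_eq_zero, Finset.filter_eq_empty_iff]
        intro p hp hF
        have hm := mem_sC hp
        have h := (hsum p).1 hF
        have h' : a 0 * (p 0 : ℝ) = 0 := by rw [h1, h0] at h; linarith
        rcases mul_eq_zero.1 h' with h'' | h''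
        · exact ha0 h''
        · have : p 0 = 0 := by exact_mod_cast h''
          omega
      omega
    · replace h1 : a 0 = 0 := h1
      replace h0 : c = 0 := h0
      have ha1 : a 1 ≠ 0 := fun h => ha' ⟨h1, h⟩
      have hA : ((sA n).filter (fun p => ∑ i, a i * toReal p i = c)).card ≤ 1 := by
        rw [Finset.card_le_one]
        intro p hp q hq
        obtain ⟨hp1, hp2⟩ := Finset.mem_filter.1 hp
        obtain ⟨hq1, hq2⟩ := Finset.mem_filter.1 hq
        have hpm := mem_sA hp1; have hqm := mem_sA hq1
        have hpz : p 1 = 0 := by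
          have h := eqA p hp1 hp2
          rw [h0] at h
          rcases mul_eq_zero.1 h with h' | h'
          · exact absurd h' ha1
          · exact_mod_cast h'
        have hqz : q 1 = 0 := by
          have h := eqA q hq1 hq2
          rw [h0] at h
          rcases mul_eq_zero.1 h with h' | h'
          · exact absurd h' ha1
          · exact_mod_cast h'
        exact ext2 (by omega) (by omega)
      have hB : ((sB n).filter (fun p => ∑ i, a i * toReal p i = c)).card ≤ n - 1 :=
        le_trans (Finset.card_filter_le _ _) (le_of_eq (cardB n))
      have hC : ((sC n).filter (fun p => ∑ i, a i * toReal p i = c)).card = 0 := by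
        rw [Finset.card_eq_zero, Finset.filter_eq_empty_iff]
        intro p hp hF
        have hm := mem_sC hp
        have h := eqC p hp hF
        rw [h1, h0] at h
        have h' : a 1 * ((n:ℝ) - 1 - (p 0 : ℝ)) = 0 := by linarith
        rcases mul_eq_zero.1 h' with h'' | h''
        · exact ha1 h''
        · have : p 0 = (n:ℤ) - 1 := by
            have hx : ((p 0 : ℤ) : ℝ) = (((n:ℤ) - 1 : ℤ) : ℝ) := by push_cast; linarith
            exact_mod_cast hx
          omega
      omega
    · replace h01 : a 0 = a 1 := h01
      replace hc0 : c = a 0 * ((n:ℝ) - 1) := hc0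
      have ha0 : a 0 ≠ 0 := fun h => ha' ⟨h, by rw [← h01]; exact h⟩
      have ha1 : a 1 ≠ 0 := by rw [← h01]; exact ha0
      have hA : ((sA n).filter (fun p => ∑ i, a i * toReal p i = c)).card ≤ 1 := by
        rw [Finset.card_le_one]
        intro p hp q hq
        obtain ⟨hp1, hp2⟩ := Finset.mem_filter.1 hp
        obtain ⟨hq1, hq2⟩ := Finset.mem_filter.1 hq
        have hpm := mem_sA hp1; have hqm := mem_sA hq1
        have key : ∀ r ∈ sA n, (∑ i, a i * toReal r i = c) → r 1 = (n:ℤ) - 1 := by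
          intro r hr hFr
          have h := eqA r hr hFr
          rw [hc0, h01] at h
          have h' : a 1 * ((r 1 : ℝ) - ((n:ℝ) - 1)) = 0 := by linear_combination h
          rcases mul_eq_zero.1 h' with h'' | h''
          · exact absurd h'' ha1
          · have hx : ((r 1 : ℤ) : ℝ) = (((n:ℤ) - 1 : ℤ) : ℝ) := by push_cast; linarith
            exact_mod_cast hx
        have hp' := key p hp1 hp2
        have hq' := key q hq1 hq2
        exact ext2 (by omega) (by omega)
      have hB : ((sB n).filter (fun p => ∑ i, a i * toReal p i = c)).card ≤ 1 := by
        rw [Finset.card_le_one]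
        intro p hp q hq
        obtain ⟨hp1, hp2⟩ := Finset.mem_filter.1 hp
        obtain ⟨hq1, hq2⟩ := Finset.mem_filter.1 hq
        have hpm := mem_sB hp1; have hqm := mem_sB hq1
        have key : ∀ r ∈ sB n, (∑ i, a i * toReal r i = c) → r 0 = (n:ℤ) - 1 := by
          intro r hr hFr
          have h := eqB r hr hFr
          rw [hc0] at h
          have h' : a 0 * ((r 0 : ℝ) - ((n:ℝ) - 1)) = 0 := by linear_combination h
          rcases mul_eq_zero.1 h' with h'' | h''
          · exact absurd h'' ha0
          · have hx : ((r 0 : ℤ) : ℝ) = (((n:ℤ) - 1 : ℤ) : ℝ) := by push_cast; linarith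
            exact_mod_cast hx
        have hp' := key p hp1 hp2
        have hq' := key q hq1 hq2
        exact ext2 (by omega) (by omega)
      have hC : ((sC n).filter (fun p => ∑ i, a i * toReal p i = c)).card ≤ n - 2 :=
        le_trans (Finset.card_filter_le _ _) (le_of_eq (cardC n))
      omega
  · rw [if_neg hside]
    have hA : ((sA n).filter (fun p => ∑ i, a i * toReal p i = c)).card ≤ 1 := by
      rw [Finset.card_le_one]
      intro p hp q hq
      obtain ⟨hp1, hp2⟩ := Finset.mem_filter.1 hp
      obtain ⟨hq1, hq2⟩ := Finset.mem_filter.1 hq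
      have hpm := mem_sA hp1; have hqm := mem_sA hq1
      have hpe := eqA p hp1 hp2; have hqe := eqA q hq1 hq2
      have h11 : p 1 = q 1 := by
        by_contra hne
        have hner : (p 1 : ℝ) ≠ (q 1 : ℝ) := by exact_mod_cast hne
        have h1z : a 1 = 0 := by
          have hk : a 1 * ((p 1:ℝ) - (q 1:ℝ)) = 0 := by linear_combination hpe - hqe
          rcases mul_eq_zero.1 hk with h | h
          · exact h
          · exact absurd (sub_eq_zero.1 h) hner
        exact absurd (Or.inl ⟨h1z, by rw [h1z] at hpe; linarith⟩) hside
      exact ext2 (by omega) h11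
    have hB : ((sB n).filter (fun p => ∑ i, a i * toReal p i = c)).card ≤ 1 := by
      rw [Finset.card_le_one]
      intro p hp q hq
      obtain ⟨hp1, hp2⟩ := Finset.mem_filter.1 hp
      obtain ⟨hq1, hq2⟩ := Finset.mem_filter.1 hq
      have hpm := mem_sB hp1; have hqm := mem_sB hq1
      have hpe := eqB p hp1 hp2; have hqe := eqB q hq1 hq2
      have h00 : p 0 = q 0 := by
        by_contra hne
        have hner : (p 0 : ℝ) ≠ (q 0 : ℝ) := by exact_mod_cast hne
        have h0z : a 0 = 0 := by
          have hk : a 0 * ((p 0:ℝ) - (q 0:ℝ)) = 0 := by linear_combination hpe - hqe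
          rcases mul_eq_zero.1 hk with h | h
          · exact h
          · exact absurd (sub_eq_zero.1 h) hner
        exact absurd (Or.inr (Or.inl ⟨h0z, by rw [h0z] at hpe; linarith⟩)) hside
      exact ext2 h00 (by omega)
    have hC : ((sC n).filter (fun p => ∑ i, a i * toReal p i = c)).card ≤ 1 := by
      rw [Finset.card_le_one]
      intro p hp q hq
      obtain ⟨hp1, hp2⟩ := Finset.mem_filter.1 hp
      obtain ⟨hq1, hq2⟩ := Finset.mem_filter.1 hq
      have hpm := mem_sC hp1; have hqm := mem_sC hq1
      have hpe := eqC p hp1 hp2; have hqe := eqC q hq1 hq2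
      have h00 : p 0 = q 0 := by
        by_contra hne
        have hner : (p 0 : ℝ) ≠ (q 0 : ℝ) := by exact_mod_cast hne
        have heq : a 0 = a 1 := by
          have hk : (a 0 - a 1) * ((p 0:ℝ) - (q 0:ℝ)) = 0 := by
            linear_combination hpe - hqe
          rcases mul_eq_zero.1 hk with h | h
          · linarith [sub_eq_zero.1 h]
          · exact absurd (sub_eq_zero.1 h) hner
        have hcc : c = a 0 * ((n:ℝ) - 1) := by
          rw [heq] at hpe ⊢
          linear_combination -hpe
        exact absurd (Or.inr (Or.inr ⟨heq, hcc⟩)) hside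
      exact ext2 h00 (by omega)
    by_contra hbig
    push_neg at hbig
    have hA1 : ((sA n).filter (fun p => ∑ i, a i * toReal p i = c)).card = 1 := by omega
    have hB1 : ((sB n).filter (fun p => ∑ i, a i * toReal p i = c)).card = 1 := by omega
    have hC1 : ((sC n).filter (fun p => ∑ i, a i * toReal p i = c)).card = 1 := by omega
    obtain ⟨p, hp⟩ := Finset.card_pos.1
      (by omega : 0 < ((sA n).filter (fun p => ∑ i, a i * toReal p i = c)).card)
    obtain ⟨q, hq⟩ := Finset.card_pos.1
      (by omega : 0 < ((sB n).filter (fun p => ∑ i, a i * toReal p i = c)).card)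
    obtain ⟨r, hr⟩ := Finset.card_pos.1
      (by omega : 0 < ((sC n).filter (fun p => ∑ i, a i * toReal p i = c)).card)
    obtain ⟨hp1, hp2⟩ := Finset.mem_filter.1 hp
    obtain ⟨hq1, hq2⟩ := Finset.mem_filter.1 hq
    obtain ⟨hr1, hr2⟩ := Finset.mem_filter.1 hr
    have hpm := mem_sA hp1; have hqm := mem_sB hq1; have hrm := mem_sC hr1
    have e1 := eqA p hp1 hp2
    have e2 := eqB q hq1 hq2
    have e3 := eqC r hr1 hr2
    exact hside (core n hn (a 0) (a 1) c ha' (p 1) (q 0) (r 0)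
      hpm.2.1 hpm.2.2 hqm.2.1 hqm.2.2 hrm.1 (by omega) e1 e2 e3)


private lemma sum_hypCount_le (n : ℕ) (hn : 2 ≤ n) (C : Multiset ((Fin 2 → ℝ) × ℝ)) :
    (∀ H ∈ C, H.1 ≠ 0) →
    ∑ p ∈ bdry n, hypCount 2 C (toReal p) ≤
      2 * Multiset.card C + (n - 2) * Multiset.countP (sideT n) C := by
  induction C using Multiset.induction_on with
  | empty => intro _; simp [hypCount]
  | cons H C ih =>
    intro hC
    have hH : H.1 ≠ 0 := hC H (Multiset.mem_cons_self H C)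
    have ih' := ih (fun H' h => hC H' (Multiset.mem_cons_of_mem h))
    have key := line_card_le n hn H.1 H.2 hH
    rw [Finset.card_filter] at key
    simp only [hypCount, Multiset.countP_cons, Multiset.card_cons] at *
    rw [Finset.sum_add_distrib]
    by_cases hs : sideT n H
    · have hs' : sideT n (H.1, H.2) := hs
      rw [if_pos hs'] at key
      rw [if_pos hs]
      have h2 : (n - 2) * (Multiset.countP (sideT n) C + 1)
          = (n - 2) * Multiset.countP (sideT n) C + (n - 2) := by ring
      rw [h2]
      have h3 : n ≤ 2 + (n - 2) := by omega
      linarith [ih', key, h3]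
    · have hs' : ¬ sideT n (H.1, H.2) := hs
      rw [if_neg hs'] at key
      rw [if_neg hs, add_zero]
      linarith [ih', key]

private lemma countP_or_le {α : Type*} (p q : α → Prop) [DecidablePred p] [DecidablePred q] (s : Multiset α) :
    Multiset.countP (fun a => p a ∨ q a) s
      ≤ Multiset.countP p s + Multiset.countP q s := by
  induction s using Multiset.induction_on with
  | empty => simp
  | cons a s ih =>
    simp only [Multiset.countP_cons]
    by_cases hp : p a <;> by_cases hq : q a <;>
      simp only [hp, hq, if_pos, if_neg, or_true, true_or, false_or,
        or_false, if_true, if_false, not_false_iff] <;> omega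

private lemma shrink (n : ℕ) (hn : 3 ≤ n) (C : Multiset ((Fin 2 → ℝ) × ℝ))
    (hC : ∀ H ∈ C, H.1 ≠ 0) (hcov : ∀ x ∈ TriGrid 2 n, 2 ≤ hypCount 2 C (toReal x))
    (Pr : ((Fin 2 → ℝ) × ℝ) → Prop) [DecidablePred Pr] (v0 v1 : ℤ) (hv0 : 0 ≤ v0) (hv1 : 0 ≤ v1)
    (hvs : v0 + v1 ≤ 1)
    (hmiss : ∀ H ∈ C, Pr H → ∀ x ∈ TriGrid 2 (n-1),
      ¬ (H.1 0 * ((x 0 : ℝ) + (v0:ℝ)) + H.1 1 * ((x 1 : ℝ) + (v1:ℝ)) = H.2))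
    (h2 : 2 ≤ Multiset.countP Pr C) :
    ∃ C' : Multiset ((Fin 2 → ℝ) × ℝ), Multiset.card C' + 2 ≤ Multiset.card C ∧
      (∀ H ∈ C', H.1 ≠ 0) ∧ (∀ x ∈ TriGrid 2 (n-1), 2 ≤ hypCount 2 C' (toReal x)) := by
  refine ⟨(C.filter (fun H => ¬ Pr H)).map
    (fun H => (H.1, H.2 - (H.1 0 * (v0:ℝ) + H.1 1 * (v1:ℝ)))), ?_, ?_, ?_⟩
  · rw [Multiset.card_map]
    have hsplit := congrArg Multiset.card (Multiset.filter_add_not Pr C)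
    rw [Multiset.card_add] at hsplit
    have hcnt : Multiset.countP Pr C = Multiset.card (Multiset.filter Pr C) :=
      Multiset.countP_eq_card_filter _ _
    omega
  · intro H' hH'
    obtain ⟨H, hH, rfl⟩ := Multiset.mem_map.1 hH'
    exact hC H (Multiset.mem_of_mem_filter hH)
  · intro x hx
    rw [mem_TriGrid] at hx
    set y : Fin 2 → ℤ := ![x 0 + v0, x 1 + v1] with hy
    have hyT : y ∈ TriGrid 2 n := by
      rw [mem_TriGrid, hy]
      simp only [Matrix.cons_val_zero, Matrix.cons_val_one, Matrix.head_cons]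
      have : ((n - 1 : ℕ) : ℤ) = (n:ℤ) - 1 := by omega
      omega
    have hy0 : toReal y 0 = (x 0 : ℝ) + (v0:ℝ) := by
      rw [hy]; simp [toReal]
    have hy1 : toReal y 1 = (x 1 : ℝ) + (v1:ℝ) := by
      rw [hy]; simp [toReal]
    have hcv := hcov y hyT
    rw [hypCount] at hcv
    rw [hypCount, Multiset.countP_map, ← Multiset.countP_eq_card_filter]
    have hEq : Multiset.countP
        (fun H : (Fin 2 → ℝ) × ℝ =>
          ∑ i, H.1 i * toReal x i = H.2 - (H.1 0 * (v0:ℝ) + H.1 1 * (v1:ℝ)))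
        (C.filter (fun H => ¬ Pr H))
        = Multiset.countP (fun H : (Fin 2 → ℝ) × ℝ => ∑ i, H.1 i * toReal y i = H.2)
          (C.filter (fun H => ¬ Pr H)) := by
      refine Multiset.countP_congr rfl ?_
      intro H _
      apply propext
      rw [Fin.sum_univ_two, Fin.sum_univ_two, hy0, hy1,
        show toReal x 0 = ((x 0 : ℤ) : ℝ) from rfl,
        show toReal x 1 = ((x 1 : ℤ) : ℝ) from rfl]
      constructor <;> intro h <;> linarith [h]
    have hzero : Multiset.countP (fun H => ∑ i, H.1 i * toReal y i = H.2)
        (C.filter Pr) = 0 := by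
      rw [Multiset.countP_eq_zero]
      intro H hH
      have hHC := Multiset.mem_of_mem_filter hH
      have hPr := (Multiset.mem_filter.1 hH).2
      have hm := hmiss H hHC hPr x (by rw [mem_TriGrid]; exact hx)
      rw [Fin.sum_univ_two, hy0, hy1]
      exact hm
    have hsplit : Multiset.countP (fun H => ∑ i, H.1 i * toReal y i = H.2) C
        = Multiset.countP (fun H => ∑ i, H.1 i * toReal y i = H.2) (C.filter Pr)
          + Multiset.countP (fun H => ∑ i, H.1 i * toReal y i = H.2)
            (C.filter (fun H => ¬ Pr H)) := by
      conv_lhs => rw [← Multiset.filter_add_not Pr C]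
      rw [Multiset.countP_add]
    have hfin : 2 ≤ Multiset.countP (fun H : (Fin 2 → ℝ) × ℝ =>
        ∑ i, H.1 i * toReal x i = H.2 - (H.1 0 * (v0:ℝ) + H.1 1 * (v1:ℝ)))
        (C.filter (fun H => ¬ Pr H)) := by
      rw [hEq]
      linarith [hcv, hzero, hsplit]
    exact hfin


private lemma main_ind : ∀ n : ℕ, 2 ≤ n → ∀ C : Multiset ((Fin 2 → ℝ) × ℝ),
    (∀ H ∈ C, H.1 ≠ 0) → (∀ x ∈ TriGrid 2 n, 2 ≤ hypCount 2 C (toReal x)) →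
    (3 * n + 1) / 2 ≤ Multiset.card C := by
  intro n
  induction n using Nat.strong_induction_on with
  | _ n ih =>
    intro hn C hC hcov
    by_cases ht : Multiset.countP (sideT n) C ≤ 3
    · -- direct counting over the boundary
      have h1 := sum_hypCount_le n hn C hC
      have hlow := Finset.card_nsmul_le_sum (bdry n)
        (fun p => hypCount 2 C (toReal p)) 2 (fun p hp => hcov p (bdry_subset hp))
      rw [smul_eq_mul] at hlow
      have hc3 : (n - 2) * Multiset.countP (sideT n) C ≤ (n - 2) * 3 :=
        Nat.mul_le_mul_left _ ht
      have h5 : (3 * n - 3) * 2 ≤ 2 * Multiset.card C + (n - 2) * 3 := by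
        calc (3 * n - 3) * 2 = (bdry n).card * 2 := by rw [card_bdry hn]
          _ ≤ ∑ p ∈ bdry n, hypCount 2 C (toReal p) := hlow
          _ ≤ 2 * Multiset.card C + (n - 2) * Multiset.countP (sideT n) C := h1
          _ ≤ 2 * Multiset.card C + (n - 2) * 3 := Nat.add_le_add_left hc3 _
      omega
    · push_neg at ht
      have e0 : Multiset.countP (sideT n) C = Multiset.countP
          (fun H : (Fin 2 → ℝ) × ℝ => (H.1 1 = 0 ∧ H.2 = 0) ∨
            ((H.1 0 = 0 ∧ H.2 = 0) ∨ (H.1 0 = H.1 1 ∧ H.2 = H.1 0 * ((n:ℝ)-1)))) C := by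
        refine Multiset.countP_congr rfl ?_
        intro H _
        rfl
      have hsub : Multiset.countP (sideT n) C ≤
          Multiset.countP (fun H : (Fin 2 → ℝ) × ℝ => H.1 1 = 0 ∧ H.2 = 0) C +
          (Multiset.countP (fun H : (Fin 2 → ℝ) × ℝ => H.1 0 = 0 ∧ H.2 = 0) C +
           Multiset.countP (fun H : (Fin 2 → ℝ) × ℝ =>
             H.1 0 = H.1 1 ∧ H.2 = H.1 0 * ((n:ℝ)-1)) C) := by
        rw [e0]
        refine le_trans (countP_or_le _ _ _) (Nat.add_le_add_left (countP_or_le _ _ _) _)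
      by_cases h3 : 3 ≤ n
      · have hone : 2 ≤ Multiset.countP
              (fun H : (Fin 2 → ℝ) × ℝ => H.1 1 = 0 ∧ H.2 = 0) C ∨
            2 ≤ Multiset.countP (fun H : (Fin 2 → ℝ) × ℝ => H.1 0 = 0 ∧ H.2 = 0) C ∨
            2 ≤ Multiset.countP (fun H : (Fin 2 → ℝ) × ℝ =>
              H.1 0 = H.1 1 ∧ H.2 = H.1 0 * ((n:ℝ)-1)) C := by omega
        have hrec : ∃ C' : Multiset ((Fin 2 → ℝ) × ℝ),
            Multiset.card C' + 2 ≤ Multiset.card C ∧ (∀ H ∈ C', H.1 ≠ 0) ∧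
            (∀ x ∈ TriGrid 2 (n-1), 2 ≤ hypCount 2 C' (toReal x)) := by
          rcases hone with h2c | h2c | h2c
          · refine shrink n h3 C hC hcov _ 1 0 (by norm_num) (by norm_num) (by norm_num)
              ?_ h2c
            intro H hHC hPr x hxT heq
            have ha0 : H.1 0 ≠ 0 := fun h => hC H hHC (aext h hPr.1)
            rw [mem_TriGrid] at hxT
            have hx0 : (0:ℝ) ≤ (x 0 : ℝ) := by exact_mod_cast hxT.1
            rw [hPr.1, hPr.2] at heq
            push_cast at heq
            have hz : H.1 0 * ((x 0:ℝ) + 1) = 0 := by linarith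
            rcases mul_eq_zero.1 hz with h | h
            · exact ha0 h
            · linarith
          · refine shrink n h3 C hC hcov _ 0 1 (by norm_num) (by norm_num) (by norm_num)
              ?_ h2c
            intro H hHC hPr x hxT heq
            have ha1 : H.1 1 ≠ 0 := fun h => hC H hHC (aext hPr.1 h)
            rw [mem_TriGrid] at hxT
            have hx1 : (0:ℝ) ≤ (x 1 : ℝ) := by exact_mod_cast hxT.2.1
            rw [hPr.1, hPr.2] at heq
            push_cast at heq
            have hz : H.1 1 * ((x 1:ℝ) + 1) = 0 := by linarith
            rcases mul_eq_zero.1 hz with h | h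
            · exact ha1 h
            · linarith
          · refine shrink n h3 C hC hcov _ 0 0 (by norm_num) (by norm_num) (by norm_num)
              ?_ h2c
            intro H hHC hPr x hxT heq
            have ha0 : H.1 0 ≠ 0 := by
              intro h
              exact hC H hHC (aext h (by rw [← hPr.1]; exact h))
            rw [mem_TriGrid] at hxT
            have hzx : x 0 + x 1 ≤ (n:ℤ) - 2 := by
              have := hxT.2.2
              omega
            have hzr : (x 0:ℝ) + (x 1:ℝ) ≤ (n:ℝ) - 2 := by
              have hc : ((x 0 + x 1 : ℤ) : ℝ) ≤ (((n:ℤ) - 2 : ℤ) : ℝ) := by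
                exact_mod_cast hzx
              push_cast at hc
              linarith
            rw [← hPr.1] at heq
            push_cast at heq
            have key : H.1 0 * ((x 0:ℝ) + (x 1:ℝ) - ((n:ℝ) - 1)) = 0 := by
              linear_combination heq + hPr.2
            rcases mul_eq_zero.1 key with h | h
            · exact ha0 h
            · have := sub_eq_zero.1 h
              linarith
        obtain ⟨C', hcard, hC', hcov'⟩ := hrec
        have hres := ih (n-1) (by omega) (by omega) C' hC' hcov'
        omega
      · have hle := Multiset.countP_le_card (sideT n) C
        omega

theorem stmt2 (n : ℕ) (hn : 2 ≤ n)
    (C : Multiset ((Fin 2 → ℝ) × ℝ))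
    (hC : ∀ H ∈ C, H.1 ≠ 0)
    (hcov : ∀ x ∈ TriGrid 2 n, 2 ≤ hypCount 2 C (toReal x)) :
    (3 * n + 1) / 2 ≤ Multiset.card C :=
  main_ind n hn C hC hcov
end

section
/- For all n ≥ 2, there exists a multiset of ⌈3n/2⌉ lines in ℝ² covering every point of T_2(n) at least twice. -/
open scoped Classical

theorem stmt3 (n : ℕ) (hn : 2 ≤ n) :
    ∃ C : Multiset ((Fin 2 → ℝ) × ℝ),
      Multiset.card C = (3 * n + 1) / 2 ∧ (∀ H ∈ C, H.1 ≠ 0) ∧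
      (∀ x ∈ TriGrid 2 n, 2 ≤ hypCount 2 C (toReal x)) := by
  set m := (n + 1) / 2 with hm
  set V := (Multiset.range m).map (fun i : ℕ => ((![1,0] : Fin 2 → ℝ), (i : ℝ))) with hV
  set Hz := (Multiset.range m).map (fun i : ℕ => ((![0,1] : Fin 2 → ℝ), (i : ℝ))) with hHz
  set D := (Multiset.range (n - m)).map
      (fun i : ℕ => ((![1,1] : Fin 2 → ℝ), ((n : ℝ) - 1 - (i : ℝ)))) with hD
  refine ⟨V + Hz + D, ?_, ?_, ?_⟩
  · simp only [hV, hHz, hD, Multiset.card_add, Multiset.card_map, Multiset.card_range]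
    omega
  · intro H hH
    have h10 : (![1,0] : Fin 2 → ℝ) ≠ 0 := by
      intro h; have := congrFun h 0; simp at this
    have h01 : (![0,1] : Fin 2 → ℝ) ≠ 0 := by
      intro h; have := congrFun h 1; simp at this
    have h11 : (![1,1] : Fin 2 → ℝ) ≠ 0 := by
      intro h; have := congrFun h 0; simp at this
    simp only [hV, hHz, hD, Multiset.mem_add, Multiset.mem_map, Multiset.mem_range] at hH
    rcases hH with (⟨i, _, rfl⟩ | ⟨i, _, rfl⟩) | ⟨i, _, rfl⟩
    · exact h10
    · exact h01
    · exact h11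
  · intro x hx
    obtain ⟨hpos, hsum⟩ := hx
    have ha := hpos 0
    have hb := hpos 1
    rw [Fin.sum_univ_two] at hsum
    set pred : ((Fin 2 → ℝ) × ℝ) → Prop := fun H => ∑ i, H.1 i * toReal x i = H.2 with hpred
    have hsplit : hypCount 2 (V + Hz + D) (toReal x)
        = Multiset.countP pred V + Multiset.countP pred Hz + Multiset.countP pred D := by
      simp [hypCount, Multiset.countP_add, hpred]
    have hv : x 0 < (m : ℤ) → 0 < Multiset.countP pred V := by
      intro h
      rw [Multiset.countP_pos]
      refine ⟨(![1,0], ((x 0).toNat : ℝ)), ?_, ?_⟩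
      · rw [hV, Multiset.mem_map]
        exact ⟨(x 0).toNat, Multiset.mem_range.2 (by omega), rfl⟩
      · simp only [hpred, Fin.sum_univ_two, toReal, Matrix.cons_val_zero, Matrix.cons_val_one,
          Matrix.head_cons, one_mul, zero_mul, add_zero]
        exact_mod_cast (Int.toNat_of_nonneg ha).symm
    have hh : x 1 < (m : ℤ) → 0 < Multiset.countP pred Hz := by
      intro h
      rw [Multiset.countP_pos]
      refine ⟨(![0,1], ((x 1).toNat : ℝ)), ?_, ?_⟩
      · rw [hHz, Multiset.mem_map]
        exact ⟨(x 1).toNat, Multiset.mem_range.2 (by omega), rfl⟩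
      · simp only [hpred, Fin.sum_univ_two, toReal, Matrix.cons_val_zero, Matrix.cons_val_one,
          Matrix.head_cons, one_mul, zero_mul, zero_add]
        exact_mod_cast (Int.toNat_of_nonneg hb).symm
    have hd : (m : ℤ) ≤ x 0 + x 1 → 0 < Multiset.countP pred D := by
      intro h
      rw [Multiset.countP_pos]
      refine ⟨(![1,1], ((n : ℝ) - 1 - (((n : ℤ) - 1 - (x 0 + x 1)).toNat : ℝ))), ?_, ?_⟩
      · rw [hD, Multiset.mem_map]
        exact ⟨((n : ℤ) - 1 - (x 0 + x 1)).toNat, Multiset.mem_range.2 (by omega), rfl⟩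
      · have : ((((n : ℤ) - 1 - (x 0 + x 1)).toNat : ℤ) : ℝ) = ((n : ℝ) - 1 - ((x 0 : ℝ) + (x 1 : ℝ))) := by
          rw [Int.toNat_of_nonneg (by omega)]
          push_cast
          ring
        simp only [hpred, Fin.sum_univ_two, toReal, Matrix.cons_val_zero, Matrix.cons_val_one,
          Matrix.head_cons, one_mul]
        rw [Int.cast_natCast] at this
        rw [this]
        ring
    rw [hsplit]
    have hmn : (n : ℤ) - 1 - (m : ℤ) < (m : ℤ) := by
      have : n ≤ 2 * m := by omega
      omega
    by_cases h0 : x 0 < (m : ℤ)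
    · by_cases h1 : x 1 < (m : ℤ)
      · have := hv h0; have := hh h1; omega
      · have := hv h0
        have := hd (by omega)
        omega
    · have h1 : x 1 < (m : ℤ) := by omega
      have := hh h1
      have := hd (by omega)
      omega
end

section
/- Any multiset of lines in ℝ² covering every point of T_2(n) at least four times has cardinality at least 3n, for all n ≥ 2. -/
open scoped Classical

lemma fin2_eq {α : Type*} {f g : Fin 2 → α} (h0 : f 0 = g 0) (h1 : f 1 = g 1) : f = g := by
  funext i; fin_cases i <;> assumption

lemma my_countP_mono {α : Type*} (p q : α → Prop) [DecidablePred p] [DecidablePred q]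
    (s : Multiset α)
    (h : ∀ a ∈ s, p a → q a) : s.countP p ≤ s.countP q := by
  induction s using Multiset.induction_on with
  | empty => simp
  | cons a t ih =>
    have ha := h a (Multiset.mem_cons_self a t)
    have iht := ih (fun x hx => h x (Multiset.mem_cons_of_mem hx))
    simp only [Multiset.countP_cons]
    split_ifs with h1 h2
    · omega
    · exact absurd (ha h1) h2
    · omega
    · omega

lemma my_countP_or {α : Type*} (p q r : α → Prop)
    [DecidablePred p] [DecidablePred q] [DecidablePred r]
    (hr : ∀ a, r a → p a ∨ q a) (s : Multiset α) :
    s.countP r ≤ s.countP p + s.countP q := by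
  induction s using Multiset.induction_on with
  | empty => simp
  | cons a t ih =>
    simp only [Multiset.countP_cons]
    by_cases hra : r a
    · rcases hr a hra with h | h <;> simp [h, hra] <;> omega
    · simp [hra]; omega

lemma my_swap_sum {X Y : Type*} (B : Finset X) (q : Y → X → Prop)
    [∀ H, DecidablePred (q H)] [∀ x, DecidablePred (fun y => q y x)] (C : Multiset Y) :
    (∑ p ∈ B, C.countP (fun H => q H p)) =
      (C.map (fun H => (B.filter (fun p => q H p)).card)).sum := by
  induction C using Multiset.induction_on with
  | empty => simp
  | cons a t ih =>
    simp only [Multiset.countP_cons, Multiset.map_cons, Multiset.sum_cons,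
      Finset.sum_add_distrib, ih, Finset.card_filter]
    ring

lemma my_sum_map_le {Y : Type*} (C : Multiset Y) (f g : Y → ℕ) (h : ∀ a ∈ C, f a ≤ g a) :
    (C.map f).sum ≤ (C.map g).sum := by
  induction C using Multiset.induction_on with
  | empty => simp
  | cons a t ih =>
    simp only [Multiset.map_cons, Multiset.sum_cons]
    exact Nat.add_le_add (h a (Multiset.mem_cons_self a t))
      (ih (fun x hx => h x (Multiset.mem_cons_of_mem hx)))

lemma my_sum_map_ite {Y : Type*} (C : Multiset Y) (p : Y → Prop) [DecidablePred p] (c d : ℕ) :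
    (C.map (fun a => c + (if p a then d else 0))).sum = c * Multiset.card C + d * C.countP p := by
  induction C using Multiset.induction_on with
  | empty => simp
  | cons a t ih =>
    simp only [Multiset.map_cons, Multiset.sum_cons, Multiset.countP_cons, Multiset.card_cons, ih]
    split_ifs with h <;> ring

lemma keyB (N A0 A1 B α β γ : ℝ) (hN : 1 ≤ N)
    (hα0 : 0 ≤ α) (hαN : α ≤ N) (hβ0 : 0 ≤ β) (hβN : β ≤ N) (hγ0 : 0 ≤ γ) (hγN : γ ≤ N)
    (l1 : A1 * α = B) (l2 : A0 * β = B) (l3 : A0 * γ + A1 * (N - γ) = B)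
    (ne1 : ¬(A1 = 0 ∧ B = 0)) (ne2 : ¬(A0 = 0 ∧ B = 0)) (ne3 : ¬(A0 = A1 ∧ B = N * A0))
    (d12 : α ≠ 0 ∨ β ≠ 0) (d13 : γ ≠ 0 ∨ α ≠ N - γ) (d23 : β ≠ γ ∨ N - γ ≠ 0) : False := by
  by_cases hB : B = 0
  · have hA1 : A1 ≠ 0 := fun h => ne1 ⟨h, hB⟩
    have hA0 : A0 ≠ 0 := fun h => ne2 ⟨h, hB⟩
    have hα : α = 0 := by
      rcases mul_eq_zero.mp (l1.trans hB) with h | h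
      · exact absurd h hA1
      · exact h
    have hβ : β = 0 := by
      rcases mul_eq_zero.mp (l2.trans hB) with h | h
      · exact absurd h hA0
      · exact h
    rcases d12 with h | h
    · exact h hα
    · exact h hβ
  · have hA0 : A0 ≠ 0 := by rintro rfl; rw [zero_mul] at l2; exact hB l2.symm
    have hA1 : A1 ≠ 0 := by rintro rfl; rw [zero_mul] at l1; exact hB l1.symm
    have hαne : α ≠ 0 := by rintro rfl; rw [mul_zero] at l1; exact hB l1.symm
    have hβne : β ≠ 0 := by rintro rfl; rw [mul_zero] at l2; exact hB l2.symm
    have key : γ * α + (N - γ) * β = α * β := by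
      have h2 : B * (γ * α + (N - γ) * β) = B * (α * β) := by
        linear_combination -(γ*α) * l2 - ((N-γ)*β) * l1 + (α*β) * l3
      exact mul_left_cancel₀ hB h2
    by_cases hab : α = β
    · subst hab
      have hNα : N * α = α * α := by linear_combination key
      have hαN' : α = N := (mul_right_cancel₀ hαne hNα).symm
      apply ne3
      constructor
      · have h01 : A0 * α = A1 * α := by rw [l2, l1]
        exact mul_right_cancel₀ hαne h01
      · rw [← l2, hαN']; ring
    · rcases lt_or_gt_of_ne hab with h | h
      · -- α < β : derive γ = N and β = N
        have h1 : (N - γ) * (α - β) = α * (N - β) := by linear_combination -key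
        have hNγ : N - γ ≤ 0 := by nlinarith
        have hγN' : γ = N := by linarith
        have hαpos : 0 < α := lt_of_le_of_ne hα0 (Ne.symm hαne)
        have hβN' : β = N := by
          rw [hγN'] at h1
          have : α * (N - β) = 0 := by linarith [h1]
          rcases mul_eq_zero.mp this with h' | h'
          · exact absurd h' (ne_of_gt hαpos)
          · linarith
        rcases d23 with h' | h'
        · exact h' (hβN'.trans hγN'.symm)
        · exact h' (by rw [hγN']; ring)
      · -- α > β : derive γ = 0 and α = N
        have h2 : γ * (α - β) = β * (α - N) := by linear_combination key
        have hγ0' : γ = 0 := by nlinarith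
        have hβpos : 0 < β := lt_of_le_of_ne hβ0 (Ne.symm hβne)
        have hαN' : α = N := by
          rw [hγ0'] at h2
          have : β * (α - N) = 0 := by linarith [h2]
          rcases mul_eq_zero.mp this with h' | h'
          · exact absurd h' (ne_of_gt hβpos)
          · linarith
        rcases d13 with h' | h'
        · exact h' hγ0'
        · exact h' (by rw [hγ0', hαN']; ring)

set_option maxHeartbeats 2000000 in
lemma counting (n : ℕ) (hn : 2 ≤ n) (C : Multiset ((Fin 2 → ℝ) × ℝ))
    (hC : ∀ H ∈ C, H.1 ≠ 0)
    (hcov : ∀ x ∈ TriGrid 2 n, 4 ≤ hypCount 2 C (toReal x))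
    (h1 : C.countP (fun H => H.1 1 = 0 ∧ H.2 = 0) ≤ 2)
    (h2 : C.countP (fun H => H.1 0 = 0 ∧ H.2 = 0) ≤ 2)
    (h3 : C.countP (fun H => H.1 0 = H.1 1 ∧ H.2 = ((n:ℝ) - 1) * H.1 0) ≤ 2) :
    3 * n ≤ Multiset.card C := by
  classical
  set E : ((Fin 2 → ℝ) × ℝ) → Prop := fun H =>
    (H.1 1 = 0 ∧ H.2 = 0) ∨ ((H.1 0 = 0 ∧ H.2 = 0) ∨
      (H.1 0 = H.1 1 ∧ H.2 = ((n:ℝ) - 1) * H.1 0)) with hE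
  set q : ((Fin 2 → ℝ) × ℝ) → (Fin 2 → ℤ) → Prop :=
    fun H x => ∑ i, H.1 i * toReal x i = H.2 with hq
  set B1 := (Finset.range n).image (fun t : ℕ => ![(0:ℤ), (t:ℤ)]) with hB1
  set B2 := (Finset.Ico 1 n).image (fun t : ℕ => ![(t:ℤ), (0:ℤ)]) with hB2
  set B3 := (Finset.Ico 1 (n-1)).image (fun t : ℕ => ![(t:ℤ), (n:ℤ)-1-(t:ℤ)]) with hB3
  set B := (B1 ∪ B2) ∪ B3 with hB
  -- decoding membership in B
  have memB' : ∀ p ∈ B, (∃ t : ℕ, t < n ∧ p = ![(0:ℤ), (t:ℤ)]) ∨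
      (∃ t : ℕ, 1 ≤ t ∧ t < n ∧ p = ![(t:ℤ), (0:ℤ)]) ∨
      (∃ t : ℕ, 1 ≤ t ∧ t < n - 1 ∧ p = ![(t:ℤ), (n:ℤ)-1-(t:ℤ)]) := by
    intro p hp
    simp only [hB, hB1, hB2, hB3, Finset.mem_union, Finset.mem_image, Finset.mem_range,
      Finset.mem_Ico] at hp
    rcases hp with (⟨t, ht, h⟩ | ⟨t, ht, h⟩) | ⟨t, ht, h⟩
    · exact Or.inl ⟨t, ht, h.symm⟩
    · exact Or.inr (Or.inl ⟨t, ht.1, ht.2, h.symm⟩)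
    · exact Or.inr (Or.inr ⟨t, ht.1, ht.2, h.symm⟩)
  have memB : ∀ p ∈ B, (0 ≤ p 0 ∧ 0 ≤ p 1 ∧ p 0 + p 1 ≤ (n:ℤ) - 1) ∧
      (p 0 = 0 ∨ p 1 = 0 ∨ p 0 + p 1 = (n:ℤ) - 1) := by
    intro p hp
    rcases memB' p hp with ⟨t, ht, rfl⟩ | ⟨t, ht1, ht2, rfl⟩ | ⟨t, ht1, ht2, rfl⟩
    · exact ⟨by simp only [Matrix.cons_val_zero, Matrix.cons_val_one, Matrix.head_cons]; omega,
        Or.inl (by simp)⟩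
    · exact ⟨by simp only [Matrix.cons_val_zero, Matrix.cons_val_one, Matrix.head_cons]; omega,
        Or.inr (Or.inl (by simp))⟩
    · exact ⟨by simp only [Matrix.cons_val_zero, Matrix.cons_val_one, Matrix.head_cons]; omega,
        Or.inr (Or.inr (by simp only [Matrix.cons_val_zero, Matrix.cons_val_one,
          Matrix.head_cons]; omega))⟩
  -- cardinality of B
  have cardB : B.card = n + (n - 1) + (n - 2) := by
    have i1 : Function.Injective (fun t : ℕ => ![(0:ℤ), (t:ℤ)]) := by
      intro a b h; have := congrFun h 1; simpa using this
    have i2 : Function.Injective (fun t : ℕ => ![(t:ℤ), (0:ℤ)]) := by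
      intro a b h; have := congrFun h 0; simpa using this
    have i3 : Function.Injective (fun t : ℕ => ![(t:ℤ), (n:ℤ)-1-(t:ℤ)]) := by
      intro a b h; have := congrFun h 0; simpa using this
    have d12 : Disjoint B1 B2 := by
      rw [Finset.disjoint_left]; rintro p hp1 hp2
      simp only [hB1, hB2, Finset.mem_image, Finset.mem_range, Finset.mem_Ico] at hp1 hp2
      obtain ⟨t, ht, rfl⟩ := hp1; obtain ⟨s, hs, hps⟩ := hp2
      have := congrFun hps 0; simp at this; omega
    have d13 : Disjoint B1 B3 := by
      rw [Finset.disjoint_left]; rintro p hp1 hp2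
      simp only [hB1, hB3, Finset.mem_image, Finset.mem_range, Finset.mem_Ico] at hp1 hp2
      obtain ⟨t, ht, rfl⟩ := hp1; obtain ⟨s, hs, hps⟩ := hp2
      have := congrFun hps 0; simp at this; omega
    have d23 : Disjoint B2 B3 := by
      rw [Finset.disjoint_left]; rintro p hp1 hp2
      simp only [hB2, hB3, Finset.mem_image, Finset.mem_range, Finset.mem_Ico] at hp1 hp2
      obtain ⟨t, ht, rfl⟩ := hp1; obtain ⟨s, hs, hps⟩ := hp2
      have := congrFun hps 1; simp at this; omega
    rw [hB, Finset.card_union_of_disjoint (by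
        rw [Finset.disjoint_union_left]; exact ⟨d13, d23⟩),
      Finset.card_union_of_disjoint d12, hB1, hB2, hB3,
      Finset.card_image_of_injective _ i1, Finset.card_image_of_injective _ i2,
      Finset.card_image_of_injective _ i3, Finset.card_range, Nat.card_Ico, Nat.card_Ico]
    omega
  -- lower bound on the incidence sum
  have hlow : 4 * B.card ≤ ∑ p ∈ B, C.countP (fun H => q H p) := by
    calc 4 * B.card = ∑ _p ∈ B, 4 := by rw [Finset.sum_const, smul_eq_mul, mul_comm]
      _ ≤ ∑ p ∈ B, C.countP (fun H => q H p) := by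
        apply Finset.sum_le_sum
        intro p hp
        have hm := memB p hp
        have hpT : p ∈ TriGrid 2 n := by
          constructor
          · intro i; fin_cases i
            · exact hm.1.1
            · exact hm.1.2.1
          · rw [Fin.sum_univ_two]; exact hm.1.2.2
        exact hcov p hpT
  rw [my_swap_sum B q C] at hlow
  -- upper bound per line
  have htot : 4 * B.card ≤ (C.map (fun H => 2 + (if E H then n - 2 else 0))).sum := by
    refine le_trans hlow (my_sum_map_le _ _ _ ?_)
    intro H hH
    have hHne := hC H hH
    by_cases hEH : E H
    · rw [if_pos hEH]
      refine le_trans ?_ (by omega : n ≤ 2 + (n - 2))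
      rw [hE] at hEH
      rcases hEH with ⟨ha1, hb⟩ | ⟨ha0, hb⟩ | ⟨hae, hbe⟩
      · -- the line x = 0
        have ha0 : H.1 0 ≠ 0 := by
          intro h; exact hHne (fin2_eq h ha1)
        refine le_trans (Finset.card_le_card (?_ : _ ⊆ B1))
          (by rw [hB1]; exact le_trans Finset.card_image_le (by simp))
        intro p hp
        rw [Finset.mem_filter] at hp
        obtain ⟨hpB, hline⟩ := hp
        have hp0 : p 0 = 0 := by
          simp only [hq, Fin.sum_univ_two, toReal, ha1, hb, zero_mul, add_zero] at hline
          have : (p 0 : ℝ) = 0 := by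
            rcases mul_eq_zero.mp hline with h | h
            · exact absurd h ha0
            · exact h
          exact_mod_cast this
        rcases memB' p hpB with ⟨t, ht, rfl⟩ | ⟨t, ht1, ht2, rfl⟩ | ⟨t, ht1, ht2, rfl⟩
        · rw [hB1]; exact Finset.mem_image.mpr ⟨t, Finset.mem_range.mpr ht, rfl⟩
        · simp at hp0; omega
        · simp at hp0; omega
      · -- the line y = 0
        have ha1 : H.1 1 ≠ 0 := by
          intro h; exact hHne (fin2_eq ha0 h)
        refine le_trans (Finset.card_le_card
            (?_ : _ ⊆ (Finset.range n).image (fun t : ℕ => ![(t:ℤ), (0:ℤ)])))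
          (le_trans Finset.card_image_le (by simp))
        intro p hp
        rw [Finset.mem_filter] at hp
        obtain ⟨hpB, hline⟩ := hp
        have hp1 : p 1 = 0 := by
          simp only [hq, Fin.sum_univ_two, toReal, ha0, hb, zero_mul, zero_add] at hline
          have : (p 1 : ℝ) = 0 := by
            rcases mul_eq_zero.mp hline with h | h
            · exact absurd h ha1
            · exact h
          exact_mod_cast this
        rcases memB' p hpB with ⟨t, ht, rfl⟩ | ⟨t, ht1, ht2, rfl⟩ | ⟨t, ht1, ht2, rfl⟩
        · refine Finset.mem_image.mpr ⟨0, Finset.mem_range.mpr (by omega), ?_⟩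
          simp at hp1
          apply fin2_eq <;> simp [hp1]
        · exact Finset.mem_image.mpr ⟨t, Finset.mem_range.mpr ht2, rfl⟩
        · simp at hp1; omega
      · -- the line x + y = n - 1
        have ha0 : H.1 0 ≠ 0 := by
          intro h; exact hHne (fin2_eq h (hae ▸ h))
        refine le_trans (Finset.card_le_card
            (?_ : _ ⊆ (Finset.range n).image (fun t : ℕ => ![(t:ℤ), (n:ℤ)-1-(t:ℤ)])))
          (le_trans Finset.card_image_le (by simp))
        intro p hp
        rw [Finset.mem_filter] at hp
        obtain ⟨hpB, hline⟩ := hp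
        have hps : p 0 + p 1 = (n:ℤ) - 1 := by
          simp only [hq, Fin.sum_univ_two, toReal, ← hae, hbe] at hline
          have h' : H.1 0 * ((p 0:ℝ) + (p 1:ℝ) - ((n:ℝ) - 1)) = 0 := by ring_nf; linarith [hline]
          have : (p 0 : ℝ) + (p 1 : ℝ) = (n:ℝ) - 1 := by
            rcases mul_eq_zero.mp h' with h | h
            · exact absurd h ha0
            · linarith
          exact_mod_cast this
        rcases memB' p hpB with ⟨t, ht, rfl⟩ | ⟨t, ht1, ht2, rfl⟩ | ⟨t, ht1, ht2, rfl⟩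
        · refine Finset.mem_image.mpr ⟨0, Finset.mem_range.mpr (by omega), ?_⟩
          simp at hps
          apply fin2_eq <;> simp <;> omega
        · refine Finset.mem_image.mpr ⟨t, Finset.mem_range.mpr ht2, ?_⟩
          simp at hps
          apply fin2_eq <;> simp <;> omega
        · exact Finset.mem_image.mpr ⟨t, Finset.mem_range.mpr (by omega), rfl⟩
    · rw [if_neg hEH, add_zero]
      -- a non-edge line contains at most 2 boundary points
      rw [hE, not_or, not_or] at hEH
      obtain ⟨ne1, ne23⟩ := hEH
      obtain ⟨ne2, ne3⟩ := ne23
      by_contra hgt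
      push_neg at hgt
      obtain ⟨p, r, s, hpm, hrm, hsm, hpr, hps, hrs⟩ := Finset.two_lt_card_iff.mp hgt
      -- extract data for each point
      have hdata : ∀ x ∈ B.filter (fun p => q H p),
          (H.1 0 * (x 0 : ℝ) + H.1 1 * (x 1 : ℝ) = H.2) ∧
          (0 ≤ x 0 ∧ 0 ≤ x 1 ∧ x 0 + x 1 ≤ (n:ℤ) - 1) ∧
          (x 0 = 0 ∨ x 1 = 0 ∨ x 0 + x 1 = (n:ℤ) - 1) := by
        intro x hx
        rw [Finset.mem_filter] at hx
        obtain ⟨hxB, hline⟩ := hx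
        have hm := memB x hxB
        refine ⟨?_, hm.1, hm.2⟩
        simpa only [hq, Fin.sum_univ_two, toReal] using hline
      obtain ⟨Lp, bp, cp⟩ := hdata p hpm
      obtain ⟨Lr, br, cr⟩ := hdata r hrm
      obtain ⟨Ls, bs, cs⟩ := hdata s hsm
      -- helper lemmas
      have h1' : ∀ x y : Fin 2 → ℤ,
          (H.1 0 * (x 0 : ℝ) + H.1 1 * (x 1 : ℝ) = H.2) →
          (H.1 0 * (y 0 : ℝ) + H.1 1 * (y 1 : ℝ) = H.2) →
          x ≠ y → x 0 = 0 → y 0 = 0 → False := by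
        intro x y Lx Ly hxy hx0 hy0
        have hx1 : (x 1 : ℝ) ≠ (y 1 : ℝ) := by
          intro h
          exact hxy (fin2_eq (hx0.trans hy0.symm) (by exact_mod_cast h))
        rw [hx0] at Lx; rw [hy0] at Ly
        push_cast at Lx Ly
        have hA1 : H.1 1 = 0 := by
          have : H.1 1 * ((x 1:ℝ) - (y 1:ℝ)) = 0 := by linarith
          rcases mul_eq_zero.mp this with h | h
          · exact h
          · exact absurd (by linarith : (x 1:ℝ) = (y 1:ℝ)) hx1
        exact ne1 ⟨hA1, by rw [← Lx, hA1]; ring⟩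
      have h2' : ∀ x y : Fin 2 → ℤ,
          (H.1 0 * (x 0 : ℝ) + H.1 1 * (x 1 : ℝ) = H.2) →
          (H.1 0 * (y 0 : ℝ) + H.1 1 * (y 1 : ℝ) = H.2) →
          x ≠ y → x 1 = 0 → y 1 = 0 → False := by
        intro x y Lx Ly hxy hx1 hy1
        have hx0 : (x 0 : ℝ) ≠ (y 0 : ℝ) := by
          intro h
          exact hxy (fin2_eq (by exact_mod_cast h) (hx1.trans hy1.symm))
        rw [hx1] at Lx; rw [hy1] at Ly
        push_cast at Lx Ly
        have hA0 : H.1 0 = 0 := by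
          have : H.1 0 * ((x 0:ℝ) - (y 0:ℝ)) = 0 := by linarith
          rcases mul_eq_zero.mp this with h | h
          · exact h
          · exact absurd (by linarith : (x 0:ℝ) = (y 0:ℝ)) hx0
        exact ne2 ⟨hA0, by rw [← Lx, hA0]; ring⟩
      have h3' : ∀ x y : Fin 2 → ℤ,
          (H.1 0 * (x 0 : ℝ) + H.1 1 * (x 1 : ℝ) = H.2) →
          (H.1 0 * (y 0 : ℝ) + H.1 1 * (y 1 : ℝ) = H.2) →
          x ≠ y → x 0 + x 1 = (n:ℤ) - 1 → y 0 + y 1 = (n:ℤ) - 1 → False := by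
        intro x y Lx Ly hxy hxs hys
        have hx0 : (x 0 : ℝ) ≠ (y 0 : ℝ) := by
          intro h
          have h0 : x 0 = y 0 := by exact_mod_cast h
          exact hxy (fin2_eq h0 (by omega))
        have hx1R : (x 1 : ℝ) = ((n:ℝ) - 1) - (x 0:ℝ) := by
          have h' : ((x 0:ℝ) + (x 1:ℝ)) = (n:ℝ) - 1 := by exact_mod_cast hxs
          linarith
        have hy1R : (y 1 : ℝ) = ((n:ℝ) - 1) - (y 0:ℝ) := by
          have h' : ((y 0:ℝ) + (y 1:ℝ)) = (n:ℝ) - 1 := by exact_mod_cast hys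
          linarith
        rw [hx1R] at Lx; rw [hy1R] at Ly
        have hA01 : H.1 0 = H.1 1 := by
          have : (H.1 0 - H.1 1) * ((x 0:ℝ) - (y 0:ℝ)) = 0 := by ring_nf; linarith [Lx, Ly]
          rcases mul_eq_zero.mp this with h | h
          · linarith
          · exact absurd (by linarith : (x 0:ℝ) = (y 0:ℝ)) hx0
        refine ne3 ⟨hA01, ?_⟩
        rw [← Lx, ← hA01]; ring
      have hB' : ∀ x y z : Fin 2 → ℤ,
          (H.1 0 * (x 0 : ℝ) + H.1 1 * (x 1 : ℝ) = H.2) →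
          (H.1 0 * (y 0 : ℝ) + H.1 1 * (y 1 : ℝ) = H.2) →
          (H.1 0 * (z 0 : ℝ) + H.1 1 * (z 1 : ℝ) = H.2) →
          (0 ≤ x 0 ∧ 0 ≤ x 1 ∧ x 0 + x 1 ≤ (n:ℤ) - 1) →
          (0 ≤ y 0 ∧ 0 ≤ y 1 ∧ y 0 + y 1 ≤ (n:ℤ) - 1) →
          (0 ≤ z 0 ∧ 0 ≤ z 1 ∧ z 0 + z 1 ≤ (n:ℤ) - 1) →
          x ≠ y → x ≠ z → y ≠ z →
          x 0 = 0 → y 1 = 0 → z 0 + z 1 = (n:ℤ) - 1 → False := by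
        intro x y z Lx Ly Lz bx by' bz hxy hxz hyz hx0 hy1 hzs
        apply keyB ((n:ℝ) - 1) (H.1 0) (H.1 1) H.2 (x 1 : ℝ) (y 0 : ℝ) (z 0 : ℝ)
        · have : (2:ℝ) ≤ (n:ℝ) := by exact_mod_cast hn
          linarith
        · exact_mod_cast bx.2.1
        · have : x 1 ≤ (n:ℤ) - 1 := by omega
          calc (x 1 : ℝ) ≤ ((n:ℤ) - 1 : ℤ) := by exact_mod_cast this
            _ = (n:ℝ) - 1 := by push_cast; ring
        · exact_mod_cast by'.1
        · have : y 0 ≤ (n:ℤ) - 1 := by omega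
          calc (y 0 : ℝ) ≤ ((n:ℤ) - 1 : ℤ) := by exact_mod_cast this
            _ = (n:ℝ) - 1 := by push_cast; ring
        · exact_mod_cast bz.1
        · have : z 0 ≤ (n:ℤ) - 1 := by omega
          calc (z 0 : ℝ) ≤ ((n:ℤ) - 1 : ℤ) := by exact_mod_cast this
            _ = (n:ℝ) - 1 := by push_cast; ring
        · rw [hx0] at Lx; push_cast at Lx; linarith
        · rw [hy1] at Ly; push_cast at Ly; linarith
        · have hz1R : (z 1 : ℝ) = ((n:ℝ) - 1) - (z 0:ℝ) := by
            have h' : ((z 0:ℝ) + (z 1:ℝ)) = (n:ℝ) - 1 := by exact_mod_cast hzs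
            linarith
          rw [hz1R] at Lz; linarith
        · exact ne1
        · exact ne2
        · exact ne3
        · -- distinctness x y
          by_contra hcon
          push_neg at hcon
          obtain ⟨e1', e2'⟩ := hcon
          have hx1 : x 1 = 0 := by exact_mod_cast e1'
          have hy0 : y 0 = 0 := by exact_mod_cast e2'
          exact hxy (fin2_eq (by omega) (by omega))
        · by_contra hcon
          push_neg at hcon
          obtain ⟨e1', e2'⟩ := hcon
          have hz0 : z 0 = 0 := by exact_mod_cast e1'
          have hx1 : x 1 = (n:ℤ) - 1 := by
            have : (x 1 : ℝ) = ((n:ℤ) - 1 : ℤ) := by rw [e2', hz0]; push_cast; ring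
            exact_mod_cast this
          exact hxz (fin2_eq (by omega) (by omega))
        · by_contra hcon
          push_neg at hcon
          obtain ⟨e1', e2'⟩ := hcon
          have hyz0 : y 0 = z 0 := by exact_mod_cast e1'
          have hz0 : z 0 = (n:ℤ) - 1 := by
            have : ((z 0 : ℝ)) = ((n:ℤ) - 1 : ℤ) := by push_cast; linarith [e2']
            exact_mod_cast this
          exact hyz (fin2_eq (by omega) (by omega))
      -- case bash over the positions of the three points
      rcases cp with hp' | hp' | hp' <;> rcases cr with hr' | hr' | hr' <;>
        rcases cs with hs' | hs' | hs' <;>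
        first
          | exact h1' p r Lp Lr hpr hp' hr'
          | exact h1' p s Lp Ls hps hp' hs'
          | exact h1' r s Lr Ls hrs hr' hs'
          | exact h2' p r Lp Lr hpr hp' hr'
          | exact h2' p s Lp Ls hps hp' hs'
          | exact h2' r s Lr Ls hrs hr' hs'
          | exact h3' p r Lp Lr hpr hp' hr'
          | exact h3' p s Lp Ls hps hp' hs'
          | exact h3' r s Lr Ls hrs hr' hs'
          | exact hB' p r s Lp Lr Ls bp br bs hpr hps hrs hp' hr' hs'
          | exact hB' p s r Lp Ls Lr bp bs br hps hpr hrs.symm hp' hs' hr'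
          | exact hB' r p s Lr Lp Ls br bp bs hpr.symm hrs hps hr' hp' hs'
          | exact hB' r s p Lr Ls Lp br bs bp hrs hpr.symm hps.symm hr' hs' hp'
          | exact hB' s p r Ls Lp Lr bs bp br hps.symm hrs.symm hpr hs' hp' hr'
          | exact hB' s r p Ls Lr Lp bs br bp hrs.symm hps.symm hpr.symm hs' hr' hp'
  -- combine
  have hsum := my_sum_map_ite C E 2 (n - 2)
  have hs6 : C.countP E ≤ 6 := by
    have step1 : C.countP E ≤ C.countP (fun H => H.1 1 = 0 ∧ H.2 = 0) +
        C.countP (fun H => (H.1 0 = 0 ∧ H.2 = 0) ∨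
          (H.1 0 = H.1 1 ∧ H.2 = ((n:ℝ) - 1) * H.1 0)) :=
      my_countP_or _ _ E (fun a ha => by rw [hE] at ha; exact ha) C
    have step2 : C.countP (fun H => (H.1 0 = 0 ∧ H.2 = 0) ∨
          (H.1 0 = H.1 1 ∧ H.2 = ((n:ℝ) - 1) * H.1 0)) ≤
        C.countP (fun H => H.1 0 = 0 ∧ H.2 = 0) +
        C.countP (fun H => H.1 0 = H.1 1 ∧ H.2 = ((n:ℝ) - 1) * H.1 0) :=
      my_countP_or _ _ _ (fun a ha => ha) C
    omega
  have hmul : (n - 2) * C.countP E ≤ (n - 2) * 6 := Nat.mul_le_mul_left _ hs6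
  omega

/-- Removing three copies of the long-edge line still `4`-covers the smaller triangle. -/
lemma peel (n : ℕ) (hn : 2 ≤ n) (C : Multiset ((Fin 2 → ℝ) × ℝ))
    (hC : ∀ H ∈ C, H.1 ≠ 0)
    (hcov : ∀ x ∈ TriGrid 2 n, 4 ≤ hypCount 2 C (toReal x))
    (h3 : 3 ≤ C.countP (fun H => H.1 0 = H.1 1 ∧ H.2 = ((n:ℝ) - 1) * H.1 0)) :
    ∃ D : Multiset ((Fin 2 → ℝ) × ℝ), Multiset.card D + 3 ≤ Multiset.card C ∧
      (∀ H ∈ D, H.1 ≠ 0) ∧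
      (∀ x ∈ TriGrid 2 (n-1), 4 ≤ hypCount 2 D (toReal x)) := by
  classical
  set e3 : ((Fin 2 → ℝ) × ℝ) → Prop := fun H => H.1 0 = H.1 1 ∧ H.2 = ((n:ℝ) - 1) * H.1 0
    with he3
  refine ⟨C.filter (fun H => ¬ e3 H), ?_, ?_, ?_⟩
  · have hsplit := Multiset.filter_add_not e3 C
    have hcards : Multiset.card (C.filter e3) + Multiset.card (C.filter (fun H => ¬ e3 H))
        = Multiset.card C := by
      rw [← Multiset.card_add, hsplit]
    have : 3 ≤ Multiset.card (C.filter e3) := by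
      rw [← Multiset.countP_eq_card_filter]; exact h3
    omega
  · intro H hH
    exact hC H (Multiset.mem_of_mem_filter hH)
  · intro x hx
    obtain ⟨hx1, hx2⟩ := hx
    rw [Fin.sum_univ_two] at hx2
    have hxn : x 0 + x 1 ≤ (n:ℤ) - 2 := by
      have : ((n:ℕ) - 1 : ℕ) = (n:ℤ) - 1 := by omega
      omega
    have hxT : x ∈ TriGrid 2 n := by
      refine ⟨hx1, ?_⟩
      rw [Fin.sum_univ_two]
      omega
    have hfull := hcov x hxT
    unfold hypCount at hfull ⊢
    have hsplit := Multiset.filter_add_not e3 C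
    calc 4 ≤ Multiset.countP (fun H => ∑ i, H.1 i * toReal x i = H.2) C := hfull
      _ = Multiset.countP (fun H => ∑ i, H.1 i * toReal x i = H.2)
            (C.filter e3 + C.filter (fun H => ¬ e3 H)) := by rw [hsplit]
      _ = Multiset.countP (fun H => ∑ i, H.1 i * toReal x i = H.2) (C.filter e3)
            + Multiset.countP (fun H => ∑ i, H.1 i * toReal x i = H.2)
              (C.filter (fun H => ¬ e3 H)) := by rw [Multiset.countP_add]
      _ = Multiset.countP (fun H => ∑ i, H.1 i * toReal x i = H.2)
              (C.filter (fun H => ¬ e3 H)) := by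
            have hzero : Multiset.countP (fun H => ∑ i, H.1 i * toReal x i = H.2)
                (C.filter e3) = 0 := by
              rw [Multiset.countP_eq_zero]
              intro H hH
              have hHe3 : e3 H := Multiset.of_mem_filter hH
              have hHC : H ∈ C := Multiset.mem_of_mem_filter hH
              have ha0 : H.1 0 ≠ 0 := by
                intro h
                exact hC H hHC (fin2_eq h (hHe3.1 ▸ h))
              rw [Fin.sum_univ_two]
              intro hline
              rw [← hHe3.1, hHe3.2] at hline
              simp only [toReal] at hline
              have : (x 0:ℝ) + (x 1:ℝ) = (n:ℝ) - 1 := by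
                have h' : H.1 0 * ((x 0:ℝ) + (x 1:ℝ) - ((n:ℝ) - 1)) = 0 := by
                  ring_nf; ring_nf at hline; linarith
                rcases mul_eq_zero.mp h' with h | h
                · exact absurd h ha0
                · linarith
              have hZ : x 0 + x 1 = (n:ℤ) - 1 := by exact_mod_cast this
              omega
            omega
/-- Swapping the roles of the edge `x = 0` and the long edge. -/
lemma transform1 (n : ℕ) (C : Multiset ((Fin 2 → ℝ) × ℝ))
    (hC : ∀ H ∈ C, H.1 ≠ 0)
    (hcov : ∀ x ∈ TriGrid 2 n, 4 ≤ hypCount 2 C (toReal x)) :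
    ∃ C' : Multiset ((Fin 2 → ℝ) × ℝ), Multiset.card C' = Multiset.card C ∧
      (∀ H ∈ C', H.1 ≠ 0) ∧
      (∀ x ∈ TriGrid 2 n, 4 ≤ hypCount 2 C' (toReal x)) ∧
      C.countP (fun H => H.1 1 = 0 ∧ H.2 = 0) ≤
        C'.countP (fun H => H.1 0 = H.1 1 ∧ H.2 = ((n:ℝ) - 1) * H.1 0) := by
  classical
  set τ : ((Fin 2 → ℝ) × ℝ) → ((Fin 2 → ℝ) × ℝ) :=
    fun H => (![-H.1 0, H.1 1 - H.1 0], H.2 - H.1 0 * ((n:ℝ) - 1)) with hτ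
  refine ⟨C.map τ, by simp, ?_, ?_, ?_⟩
  · intro H' hH'
    obtain ⟨H, hH, rfl⟩ := Multiset.mem_map.mp hH'
    intro h
    have h0 : -H.1 0 = 0 := by
      have := congrFun h 0; simpa [hτ] using this
    have h1 : H.1 1 - H.1 0 = 0 := by
      have := congrFun h 1; simpa [hτ] using this
    refine hC H hH (funext fun i => ?_)
    fin_cases i <;> simp <;> linarith
  · intro x hx
    obtain ⟨hx1, hx2⟩ := hx
    rw [Fin.sum_univ_two] at hx2
    have h0 := hx1 0
    have h1 := hx1 1
    set y : Fin 2 → ℤ := ![(n:ℤ) - 1 - x 0 - x 1, x 1] with hy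
    have hyT : y ∈ TriGrid 2 n := by
      constructor
      · intro i; fin_cases i <;> simp [hy] <;> omega
      · rw [Fin.sum_univ_two]; simp [hy]; try omega
    have hcy := hcov y hyT
    unfold hypCount at hcy ⊢
    rw [Multiset.countP_map]
    rw [Multiset.countP_eq_card_filter] at hcy
    refine le_trans hcy (le_of_eq ?_)
    congr 1
    apply Multiset.filter_congr
    intro H hH
    rw [Fin.sum_univ_two, Fin.sum_univ_two]
    have hy0 : toReal y 0 = (n:ℝ) - 1 - (x 0:ℝ) - (x 1:ℝ) := by
      simp only [toReal, hy, Matrix.cons_val_zero]; push_cast; ring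
    have hy1 : toReal y 1 = (x 1:ℝ) := by
      simp only [toReal, hy, Matrix.cons_val_one, Matrix.head_cons, Matrix.cons_val_zero]
    have hτ0 : (τ H).1 0 = -H.1 0 := by
      simp only [hτ, Matrix.cons_val_zero]
    have hτ1 : (τ H).1 1 = H.1 1 - H.1 0 := by
      simp only [hτ, Matrix.cons_val_one, Matrix.head_cons, Matrix.cons_val_zero]
    have hτ2 : (τ H).2 = H.2 - H.1 0 * ((n:ℝ) - 1) := by
      simp only [hτ]
    rw [hy0, hy1, hτ0, hτ1, hτ2]
    constructor
    · intro hl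
      have : toReal x 0 = (x 0 : ℝ) := rfl
      have : toReal x 1 = (x 1 : ℝ) := rfl
      simp only [toReal]
      linarith
    · intro hl
      simp only [toReal] at hl
      linarith
  · rw [Multiset.countP_map, ← Multiset.countP_eq_card_filter]
    apply my_countP_mono
    intro H _ hH1
    constructor
    · simp [hτ, hH1.1]
    · simp [hτ, hH1.2]; ring

/-- Swapping the roles of the edge `y = 0` and the long edge. -/
lemma transform2 (n : ℕ) (C : Multiset ((Fin 2 → ℝ) × ℝ))
    (hC : ∀ H ∈ C, H.1 ≠ 0)
    (hcov : ∀ x ∈ TriGrid 2 n, 4 ≤ hypCount 2 C (toReal x)) :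
    ∃ C' : Multiset ((Fin 2 → ℝ) × ℝ), Multiset.card C' = Multiset.card C ∧
      (∀ H ∈ C', H.1 ≠ 0) ∧
      (∀ x ∈ TriGrid 2 n, 4 ≤ hypCount 2 C' (toReal x)) ∧
      C.countP (fun H => H.1 0 = 0 ∧ H.2 = 0) ≤
        C'.countP (fun H => H.1 0 = H.1 1 ∧ H.2 = ((n:ℝ) - 1) * H.1 0) := by
  classical
  set τ : ((Fin 2 → ℝ) × ℝ) → ((Fin 2 → ℝ) × ℝ) :=
    fun H => (![H.1 0 - H.1 1, -H.1 1], H.2 - H.1 1 * ((n:ℝ) - 1)) with hτ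
  refine ⟨C.map τ, by simp, ?_, ?_, ?_⟩
  · intro H' hH'
    obtain ⟨H, hH, rfl⟩ := Multiset.mem_map.mp hH'
    intro h
    have h0 : H.1 0 - H.1 1 = 0 := by
      have := congrFun h 0; simpa [hτ] using this
    have h1 : -H.1 1 = 0 := by
      have := congrFun h 1; simpa [hτ] using this
    refine hC H hH (funext fun i => ?_)
    fin_cases i <;> simp <;> linarith
  · intro x hx
    obtain ⟨hx1, hx2⟩ := hx
    rw [Fin.sum_univ_two] at hx2
    have h0 := hx1 0
    have h1 := hx1 1
    set y : Fin 2 → ℤ := ![x 0, (n:ℤ) - 1 - x 0 - x 1] with hy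
    have hyT : y ∈ TriGrid 2 n := by
      constructor
      · intro i; fin_cases i <;> simp [hy] <;> omega
      · rw [Fin.sum_univ_two]; simp [hy]; try omega
    have hcy := hcov y hyT
    unfold hypCount at hcy ⊢
    rw [Multiset.countP_map]
    rw [Multiset.countP_eq_card_filter] at hcy
    refine le_trans hcy (le_of_eq ?_)
    congr 1
    apply Multiset.filter_congr
    intro H hH
    rw [Fin.sum_univ_two, Fin.sum_univ_two]
    have hy1 : toReal y 1 = (n:ℝ) - 1 - (x 0:ℝ) - (x 1:ℝ) := by
      simp only [toReal, hy, Matrix.cons_val_one, Matrix.head_cons, Matrix.cons_val_zero]; push_cast; ring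
    have hy0 : toReal y 0 = (x 0:ℝ) := by
      simp only [toReal, hy, Matrix.cons_val_zero]
    have hτ0 : (τ H).1 0 = H.1 0 - H.1 1 := by
      simp only [hτ, Matrix.cons_val_zero]
    have hτ1 : (τ H).1 1 = -H.1 1 := by
      simp only [hτ, Matrix.cons_val_one, Matrix.head_cons, Matrix.cons_val_zero]
    have hτ2 : (τ H).2 = H.2 - H.1 1 * ((n:ℝ) - 1) := by
      simp only [hτ]
    rw [hy0, hy1, hτ0, hτ1, hτ2]
    constructor
    · intro hl
      simp only [toReal]
      linarith
    · intro hl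
      simp only [toReal] at hl
      linarith
  · rw [Multiset.countP_map, ← Multiset.countP_eq_card_filter]
    apply my_countP_mono
    intro H _ hH1
    constructor
    · simp [hτ, hH1.1]
    · simp [hτ, hH1.1, hH1.2]; ring

lemma main_aux : ∀ n : ℕ, 1 ≤ n → ∀ C : Multiset ((Fin 2 → ℝ) × ℝ),
    (∀ H ∈ C, H.1 ≠ 0) → (∀ x ∈ TriGrid 2 n, 4 ≤ hypCount 2 C (toReal x)) →
    3 * n ≤ Multiset.card C := by
  intro n
  induction n using Nat.strong_induction_on with
  | _ n IH =>
  intro hn C hC hcov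
  rcases eq_or_lt_of_le hn with h1 | h2
  · -- n = 1
    have h0 : (fun _ => (0:ℤ)) ∈ TriGrid 2 n := by
      constructor
      · intro i; exact le_refl 0
      · rw [Fin.sum_univ_two]; omega
    have h4 := hcov _ h0
    have hle : hypCount 2 C (toReal (fun _ => (0:ℤ))) ≤ Multiset.card C :=
      Multiset.countP_le_card _ C
    omega
  · have hn2 : 2 ≤ n := h2
    by_cases hc3 : 3 ≤ C.countP (fun H => H.1 0 = H.1 1 ∧ H.2 = ((n:ℝ) - 1) * H.1 0)
    · obtain ⟨D, hD1, hD2, hD3⟩ := peel n hn2 C hC hcov hc3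
      have := IH (n-1) (by omega) (by omega) D hD2 hD3
      omega
    by_cases hc1 : 3 ≤ C.countP (fun H => H.1 1 = 0 ∧ H.2 = 0)
    · obtain ⟨C', hcard, hC', hcov', hle⟩ := transform1 n C hC hcov
      obtain ⟨D, hD1, hD2, hD3⟩ := peel n hn2 C' hC' hcov' (le_trans hc1 hle)
      have := IH (n-1) (by omega) (by omega) D hD2 hD3
      omega
    by_cases hc2 : 3 ≤ C.countP (fun H => H.1 0 = 0 ∧ H.2 = 0)
    · obtain ⟨C', hcard, hC', hcov', hle⟩ := transform2 n C hC hcov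
      obtain ⟨D, hD1, hD2, hD3⟩ := peel n hn2 C' hC' hcov' (le_trans hc2 hle)
      have := IH (n-1) (by omega) (by omega) D hD2 hD3
      omega
    · exact counting n hn2 C hC hcov (by omega) (by omega) (by omega)

theorem stmt5 (n : ℕ) (hn : 2 ≤ n)
    (C : Multiset ((Fin 2 → ℝ) × ℝ))
    (hC : ∀ H ∈ C, H.1 ≠ 0)
    (hcov : ∀ x ∈ TriGrid 2 n, 4 ≤ hypCount 2 C (toReal x)) :
    3 * n ≤ Multiset.card C :=
  main_aux n (by omega) C hC hcov
end

section
/- For all n ≥ 2, there exists a multiset of exactly 3n lines in ℝ² covering every point of T_2(n) at least four times. Explicitly, one may take the lines x = i, y = i, and x + y = n−1−i each with multiplicity two for i ∈ {0,…,⌊(n−1)/3⌋}, and with multiplicity one for i ∈ {⌊(n−1)/3⌋+1,…,⌊2n/3⌋−1}. -/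
open scoped Classical

/-- The vertical line `x = c`. -/
noncomputable def lineX (c : ℕ) : (Fin 2 → ℝ) × ℝ := (![1, 0], (c : ℝ))

/-- The horizontal line `y = c`. -/
noncomputable def lineY (c : ℕ) : (Fin 2 → ℝ) × ℝ := (![0, 1], (c : ℝ))

/-- The diagonal line `x + y = n - 1 - c`. -/
noncomputable def lineD (n c : ℕ) : (Fin 2 → ℝ) × ℝ := (![1, 1], (n : ℝ) - 1 - (c : ℝ))

/-- The lines `x = i`, `y = i`, `x + y = n - 1 - i`. -/
noncomputable def triple (n i : ℕ) : Multiset ((Fin 2 → ℝ) × ℝ) :=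
  {lineX i, lineY i, lineD n i}

/-- The explicit 4-cover: the lines `x = i`, `y = i`, `x + y = n - 1 - i` with multiplicity two
for `i ∈ {0, …, ⌊(n-1)/3⌋}` and multiplicity one for `i ∈ {⌊(n-1)/3⌋ + 1, …, ⌊2n/3⌋ - 1}`. -/
noncomputable def cover6 (n : ℕ) : Multiset ((Fin 2 → ℝ) × ℝ) :=
  2 • ((Finset.range ((n - 1) / 3 + 1)).val.bind (fun i => triple n i)) +
  (Finset.Ico ((n - 1) / 3 + 1) (2 * n / 3)).val.bind (fun i => triple n i)


lemma countP_bind' {α β : Type*} (s : Finset α) (f : α → Multiset β)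
    (p : β → Prop) [DecidablePred p] :
    Multiset.countP p (s.val.bind f) = ∑ a ∈ s, Multiset.countP p (f a) := by
  rw [Finset.sum]
  induction s.val using Multiset.induction with
  | empty => simp
  | cons a t ih => simp [Multiset.countP_add, ih]

lemma count_triple (n i : ℕ) (p : Fin 2 → ℝ) :
    Multiset.countP (fun H => ∑ j, H.1 j * p j = H.2) (triple n i) =
      (if p 0 = (i : ℝ) then 1 else 0) + (if p 1 = (i : ℝ) then 1 else 0) +
      (if p 0 + p 1 = (n : ℝ) - 1 - (i : ℝ) then 1 else 0) := by
  have h : triple n i = lineX i ::ₘ lineY i ::ₘ lineD n i ::ₘ 0 := rfl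
  rw [h]
  simp only [Multiset.countP_cons, Multiset.countP_zero,
    lineX, lineY, lineD, Fin.sum_univ_two, Matrix.cons_val_zero, Matrix.cons_val_one,
    Matrix.head_cons, one_mul, zero_mul, add_zero, zero_add]
  omega

theorem stmt6 (n : ℕ) (hn : 2 ≤ n) :
    Multiset.card (cover6 n) = 3 * n ∧
    (∀ x ∈ TriGrid 2 n, 4 ≤ hypCount 2 (cover6 n) (toReal x)) := by
  have hd1 := Nat.div_add_mod (n - 1) 3
  have hd2 := Nat.div_add_mod (2 * n) 3
  have hm1 : (n - 1) % 3 < 3 := Nat.mod_lt _ (by norm_num)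
  have hm2 : (2 * n) % 3 < 3 := Nat.mod_lt _ (by norm_num)
  have hcardt : ∀ i : ℕ, Multiset.card (triple n i) = 3 := fun i => rfl
  constructor
  · rw [cover6, Multiset.card_add, Multiset.card_nsmul, Multiset.card_bind,
      Multiset.card_bind]
    simp only [Function.comp, hcardt]
    rw [Multiset.map_const', Multiset.sum_replicate, Multiset.map_const',
      Multiset.sum_replicate]
    simp only [← Finset.card_def, Finset.card_range, Nat.card_Ico, smul_eq_mul]
    omega
  · rintro x ⟨hpos, hsum⟩
    rw [Fin.sum_univ_two] at hsum
    set a := (x 0).toNat with ha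
    set b := (x 1).toNat with hb
    have hx0 : x 0 = (a : ℤ) := (Int.toNat_of_nonneg (hpos 0)).symm
    have hx1 : x 1 = (b : ℤ) := (Int.toNat_of_nonneg (hpos 1)).symm
    have hab : a + b ≤ n - 1 := by
      rw [hx0, hx1] at hsum
      omega
    set c := n - 1 - (a + b) with hc
    have hp0 : toReal x 0 = (a : ℝ) := by rw [toReal, hx0]; push_cast; ring
    have hp1 : toReal x 1 = (b : ℝ) := by rw [toReal, hx1]; push_cast; ring
    have key : ∀ i : ℕ, ((a : ℝ) + (b : ℝ) = (n : ℝ) - 1 - (i : ℝ)) ↔ c = i := by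
      intro i
      constructor
      · intro h
        have h2 : (a : ℝ) + (b : ℝ) + (i : ℝ) + 1 = (n : ℝ) := by linarith
        have h3 : a + b + i + 1 = n := by exact_mod_cast h2
        omega
      · intro h
        have h3 : a + b + i + 1 = n := by omega
        have h4 : ((a + b + i + 1 : ℕ) : ℝ) = (n : ℝ) := by rw [h3]
        push_cast at h4
        linarith
    rw [hypCount, cover6, Multiset.countP_add, Multiset.countP_nsmul,
      countP_bind', countP_bind']
    simp only [count_triple, hp0, hp1, key, Nat.cast_inj]
    rw [Finset.sum_add_distrib, Finset.sum_add_distrib, Finset.sum_add_distrib,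
      Finset.sum_add_distrib, Finset.sum_ite_eq, Finset.sum_ite_eq, Finset.sum_ite_eq,
      Finset.sum_ite_eq, Finset.sum_ite_eq, Finset.sum_ite_eq]
    simp only [Finset.mem_range, Finset.mem_Ico, smul_eq_mul]
    split_ifs <;> omega
end

section
/- For every integer j ≥ 1, the minimum total weight of a fractional line cover of T_2(3j+1) equals 2j+1. That is, there is an assignment of nonnegative weights to affine lines in ℝ² with total weight 2j+1 such that for every point p of T_2(3j+1) the sum of weights of lines through p is at least 1, and no such assignment has total weight less than 2j+1. -/
open scoped Classical

/-- The total weight of a finitely-supported weight assignment on hyperplanes. -/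
noncomputable def fracTotal {d : ℕ} (w : ((Fin d → ℝ) × ℝ) →₀ ℝ) : ℝ :=
  ∑ H ∈ w.support, w H

/-- The total weight of hyperplanes passing through the point `p`. -/
noncomputable def fracAt {d : ℕ} (w : ((Fin d → ℝ) × ℝ) →₀ ℝ) (p : Fin d → ℝ) : ℝ :=
  ∑ H ∈ w.support.filter (fun H => ∑ i, H.1 i * p i = H.2), w H

/-- `w` is a fractional cover of `T_d(n)`: nonnegative weights on genuine hyperplanes such that
every grid point lies on hyperplanes of total weight at least `1`. -/
def IsFracCover (d n : ℕ) (w : ((Fin d → ℝ) × ℝ) →₀ ℝ) : Prop :=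
  (∀ H, 0 ≤ w H) ∧ (∀ H ∈ w.support, H.1 ≠ 0) ∧
  ∀ x ∈ TriGrid d n, 1 ≤ fracAt w (toReal x)

open Finset

lemma gaussZ (n : ℕ) : (∑ i ∈ range n, (i:ℤ)) * 2 = n * (n-1) := by
  induction n with
  | zero => simp
  | succ m ih => rw [Finset.sum_range_succ]; push_cast; push_cast at ih; nlinarith [ih]

lemma linsum (n : ℕ) (c d : ℤ) : ∑ k ∈ range n, (c + d * k) * 2 = (2*c + d*((n:ℤ)-1)) * n := by
  have h1 : ∑ k ∈ range n, (c + d * k) * 2 = ∑ k ∈ range n, (c*2 + d * (k*2)) := by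
    apply Finset.sum_congr rfl; intro k _; ring
  rw [h1, Finset.sum_add_distrib, Finset.sum_const, ← Finset.mul_sum]
  have h2 : ∑ k ∈ range n, ((k:ℤ)*2) = (∑ k ∈ range n, (k:ℤ)) * 2 := by rw [Finset.sum_mul]
  rw [h2, gaussZ]
  simp [mul_comm]
  ring

lemma icc_to_range (f : ℤ → ℤ) (l u : ℤ) :
    ∑ y ∈ Finset.Icc l u, f y = ∑ k ∈ range ((u + 1 - l).toNat), f (l + k) := by
  apply Finset.sum_nbij' (fun y => (y - l).toNat) (fun k => l + k)
  · intro y hy; simp only [Finset.mem_Icc] at hy; simp only [Finset.mem_range]; omega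
  · intro k hk; simp only [Finset.mem_range] at hk; simp only [Finset.mem_Icc]; omega
  · intro y hy; simp only [Finset.mem_Icc] at hy; omega
  · intro k hk; simp only [Finset.mem_range] at hk; omega
  · intro y hy; simp only [Finset.mem_Icc] at hy; congr 1; omega

lemma absline (j a : ℤ) (h0 : 0 ≤ a) (haj : a ≤ j) :
    ∑ y ∈ Finset.Icc (j-a) (2*j), (|j - a| + |j - y| + |a + y - 2*j|) * 2 = 4*j*(j+1) := by
  rw [icc_to_range]
  have hn : (2*j + 1 - (j-a)).toNat = (j+a+1).toNat := by congr 1; ring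
  rw [hn]
  have hform : ∀ k ∈ range ((j+a+1).toNat),
      (|j - a| + |j - (j - a + (k:ℤ))| + |a + (j - a + (k:ℤ)) - 2*j|) * 2
      = ((j - a) + |a - (k:ℤ)| + |(k:ℤ) - j|) * 2 := by
    intro k _
    have h1 : |j - a| = j - a := abs_of_nonneg (by omega)
    have h2 : j - (j - a + (k:ℤ)) = a - k := by ring
    have h3 : a + (j - a + (k:ℤ)) - 2*j = (k:ℤ) - j := by ring
    rw [h1, h2, h3]
  rw [Finset.sum_congr rfl hform]
  -- split at p := (a+1).toNat and q := (j+1).toNat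
  set g : ℕ → ℤ := fun k => ((j - a) + |a - (k:ℤ)| + |(k:ℤ) - j|) * 2 with hg
  have hp : (a+1).toNat ≤ ((j+a+1).toNat) := by omega
  have hq : (a+1).toNat ≤ (j+1).toNat := by omega
  have hq2 : (j+1).toNat ≤ (j+a+1).toNat := by omega
  rw [← Finset.sum_range_add_sum_Ico g hp,
      ← Finset.sum_Ico_consecutive g hq hq2]
  have c1 : ∑ k ∈ range ((a+1).toNat), g k = ∑ k ∈ range ((a+1).toNat), (2*j + (-2) * (k:ℤ)) * 2 := by
    apply Finset.sum_congr rfl; intro k hk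
    simp only [Finset.mem_range] at hk
    have h1 : |a - (k:ℤ)| = a - k := abs_of_nonneg (by omega)
    have h2 : |(k:ℤ) - j| = j - k := by rw [abs_of_nonpos (by omega)]; ring
    rw [hg]; simp only; rw [h1, h2]; ring
  have c2 : ∑ k ∈ Ico ((a+1).toNat) ((j+1).toNat), g k
      = ∑ k ∈ Ico ((a+1).toNat) ((j+1).toNat), ((2*j - 2*a) + (0:ℤ) * (k:ℤ)) * 2 := by
    apply Finset.sum_congr rfl; intro k hk
    simp only [Finset.mem_Ico] at hk
    have h1 : |a - (k:ℤ)| = (k:ℤ) - a := by rw [abs_of_nonpos (by omega)]; ring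
    have h2 : |(k:ℤ) - j| = j - k := by rw [abs_of_nonpos (by omega)]; ring
    rw [hg]; simp only; rw [h1, h2]; ring
  have c3 : ∑ k ∈ Ico ((j+1).toNat) ((j+a+1).toNat), g k
      = ∑ k ∈ Ico ((j+1).toNat) ((j+a+1).toNat), ((j - 2*a - j) + (2:ℤ) * (k:ℤ)) * 2 := by
    apply Finset.sum_congr rfl; intro k hk
    simp only [Finset.mem_Ico] at hk
    have h1 : |a - (k:ℤ)| = (k:ℤ) - a := by rw [abs_of_nonpos (by omega)]; ring
    have h2 : |(k:ℤ) - j| = (k:ℤ) - j := abs_of_nonneg (by omega)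
    rw [hg]; simp only; rw [h1, h2]; ring
  rw [c1, c2, c3]
  rw [Finset.sum_Ico_eq_sum_range, Finset.sum_Ico_eq_sum_range]
  have e1 : ∑ k ∈ range ((a+1).toNat), (2*j + (-2) * (k:ℤ)) * 2
      = (2*(2*j) + (-2)*(((a+1).toNat:ℤ)-1)) * ((a+1).toNat) := linsum _ _ _
  have hA : (((a+1).toNat:ℤ)) = a + 1 := by omega
  have hB : (((j+1).toNat:ℤ)) = j + 1 := by omega
  have hC : (((j+a+1).toNat:ℤ)) = j + a + 1 := by omega
  have hm2 : (((j+1).toNat - (a+1).toNat : ℕ):ℤ) = j - a := by omega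
  have hm3 : (((j+a+1).toNat - (j+1).toNat : ℕ):ℤ) = a := by omega
  rw [e1]
  have c2' : ∑ i ∈ range ((j+1).toNat - (a+1).toNat),
      ((2*j - 2*a) + (0:ℤ) * (((a+1).toNat:ℤ) + i)) * 2
      = ∑ i ∈ range ((j+1).toNat - (a+1).toNat), ((2*j - 2*a) + (0:ℤ) * (i:ℤ)) * 2 := by
    apply Finset.sum_congr rfl; intro i _; ring
  have c3' : ∑ i ∈ range ((j+a+1).toNat - (j+1).toNat),
      ((j - 2*a - j) + (2:ℤ) * (((j+1).toNat:ℤ) + i)) * 2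
      = ∑ i ∈ range ((j+a+1).toNat - (j+1).toNat), (((2*j + 2) - 2*a) + (2:ℤ) * (i:ℤ)) * 2 := by
    apply Finset.sum_congr rfl; intro i _; rw [hB]; ring
  have hcast : ∀ i : ℕ, (((a+1).toNat + i : ℕ):ℤ) = ((a+1).toNat:ℤ) + i := by intro i; push_cast; ring
  have hcast2 : ∀ i : ℕ, (((j+1).toNat + i : ℕ):ℤ) = ((j+1).toNat:ℤ) + i := by intro i; push_cast; ring
  simp only [hcast, hcast2]
  rw [c2', c3', linsum, linsum]
  rw [hA, hm2, hm3]
  nlinarith [sq_nonneg (j - a), sq_nonneg (j + a)]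

lemma colsum_icc (j a : ℤ) (h0 : 0 ≤ a) (h2 : a ≤ 2*j) :
    ∑ y ∈ Finset.Icc (max 0 (j-a)) (min (2*j) (3*j-a)), (|j-a| + |j-y| + |a+y-2*j|) * 2
      = 4*j*(j+1) := by
  rcases le_or_gt a j with h | h
  · have hmax : max 0 (j-a) = j - a := by omega
    have hmin : min (2*j) (3*j-a) = 2*j := by omega
    rw [hmax, hmin]; exact absline j a h0 h
  · have hmax : max 0 (j-a) = 0 := by omega
    have hmin : min (2*j) (3*j-a) = 3*j - a := by omega
    rw [hmax, hmin]
    have key : ∑ y ∈ Finset.Icc (0:ℤ) (3*j-a), (|j-a| + |j-y| + |a+y-2*j|) * 2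
        = ∑ y ∈ Finset.Icc (j-(2*j-a)) (2*j), (|j-(2*j-a)| + |j-y| + |(2*j-a)+y-2*j|) * 2 := by
      apply Finset.sum_nbij' (fun y => 2*j - y) (fun y => 2*j - y)
      · intro y hy; simp only [Finset.mem_Icc] at *; omega
      · intro y hy; simp only [Finset.mem_Icc] at *; omega
      · intro y hy; simp only [Finset.mem_Icc] at hy; omega
      · intro y hy; simp only [Finset.mem_Icc] at hy; omega
      · intro y hy; simp only [Finset.mem_Icc] at hy
        have e1 : |j - a| = |j - (2*j-a)| := by rw [abs_sub_comm]; congr 1; ring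
        have e2 : |j - y| = |j - (2*j - y)| := by rw [abs_sub_comm]; congr 1; ring
        have e3 : |a + y - 2*j| = |(2*j-a) + (2*j-y) - 2*j| := by rw [abs_sub_comm]; congr 1; ring
        rw [e1, e2, e3]
    rw [key]
    exact absline j (2*j-a) (by omega) (by omega)

noncomputable def Hexa (j : ℤ) : Finset (ℤ × ℤ) :=
  ((Finset.Icc 0 (2*j)) ×ˢ (Finset.Icc 0 (2*j))).filter (fun q => j ≤ q.1 + q.2 ∧ q.1 + q.2 ≤ 3*j)

def Nw (j : ℤ) (q : ℤ × ℤ) : ℤ := |j - q.1| + |j - q.2| + |q.1 + q.2 - 2*j|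

lemma mem_Hexa {j : ℤ} {q : ℤ × ℤ} :
    q ∈ Hexa j ↔ (0 ≤ q.1 ∧ q.1 ≤ 2*j ∧ 0 ≤ q.2 ∧ q.2 ≤ 2*j ∧ j ≤ q.1 + q.2 ∧ q.1 + q.2 ≤ 3*j) := by
  simp [Hexa, Finset.mem_filter, Finset.mem_product, Finset.mem_Icc]; tauto

lemma Nw_nonneg (j : ℤ) (q : ℤ × ℤ) : 0 ≤ Nw j q := by
  have := abs_nonneg (j - q.1); have := abs_nonneg (j - q.2); have := abs_nonneg (q.1 + q.2 - 2*j)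
  unfold Nw; omega

lemma Nw_le (j : ℤ) (q : ℤ × ℤ) (h : q ∈ Hexa j) : Nw j q ≤ 2*j := by
  rw [mem_Hexa] at h
  unfold Nw
  rw [Int.abs_eq_natAbs, Int.abs_eq_natAbs, Int.abs_eq_natAbs]
  omega

-- column sum
lemma colsum (j a : ℤ) (h0 : 0 ≤ a) (h2 : a ≤ 2*j) :
    ∑ q ∈ (Hexa j).filter (fun q => q.1 = a), (Nw j q) * 2 = 4*j*(j+1) := by
  have himg : (Hexa j).filter (fun q => q.1 = a)
      = (Finset.Icc (max 0 (j-a)) (min (2*j) (3*j-a))).image (fun y => (a, y)) := by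
    ext q
    simp only [Finset.mem_filter, Finset.mem_image, Finset.mem_Icc, mem_Hexa]
    constructor
    · rintro ⟨⟨h1,h2,h3,h4,h5,h6⟩, rfl⟩
      exact ⟨q.2, by omega, rfl⟩
    · rintro ⟨y, hy, rfl⟩
      refine ⟨⟨?_,?_,?_,?_,?_,?_⟩, rfl⟩ <;> simp only <;> omega
  rw [himg, Finset.sum_image (by intro x _ y _ h; simpa using h)]
  have : ∀ y, Nw j (a, y) = |j-a| + |j-y| + |a+y-2*j| := by intro y; rfl
  simp only [this]
  exact colsum_icc j a h0 h2

lemma rowsum (j a : ℤ) (h0 : 0 ≤ a) (h2 : a ≤ 2*j) :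
    ∑ q ∈ (Hexa j).filter (fun q => q.2 = a), (Nw j q) * 2 = 4*j*(j+1) := by
  rw [← colsum j a h0 h2]
  apply Finset.sum_nbij' (fun q => (q.2, q.1)) (fun q => (q.2, q.1))
  · intro q hq; simp only [Finset.mem_filter, mem_Hexa] at *; exact ⟨by omega, by omega⟩
  · intro q hq; simp only [Finset.mem_filter, mem_Hexa] at *; exact ⟨by omega, by omega⟩
  · intro q _; rfl
  · intro q _; rfl
  · intro q _; unfold Nw; simp only; rw [show q.2 + q.1 = q.1 + q.2 by ring]; ring

lemma diagsum (j s : ℤ) (h0 : j ≤ s) (h2 : s ≤ 3*j) :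
    ∑ q ∈ (Hexa j).filter (fun q => q.1 + q.2 = s), (Nw j q) * 2 = 4*j*(j+1) := by
  rw [← colsum j (3*j - s) (by omega) (by omega)]
  apply Finset.sum_nbij' (fun q => (3*j - q.1 - q.2, q.2)) (fun q => (3*j - q.1 - q.2, q.2))
  · intro q hq; simp only [Finset.mem_filter, mem_Hexa] at *; exact ⟨by omega, by omega⟩
  · intro q hq; simp only [Finset.mem_filter, mem_Hexa] at *; exact ⟨by omega, by omega⟩
  · intro q _
    have h : 3*j - (3*j - q.1 - q.2) - q.2 = q.1 := by ring
    simp only [h]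
  · intro q _
    have h : 3*j - (3*j - q.1 - q.2) - q.2 = q.1 := by ring
    simp only [h]
  · intro q hq
    simp only [Finset.mem_filter, mem_Hexa] at hq
    unfold Nw
    simp only
    have e1 : |j - (3*j - q.1 - q.2)| = |q.1 + q.2 - 2*j| := by congr 1; ring
    have e2 : |3*j - q.1 - q.2 + q.2 - 2*j| = |j - q.1| := by congr 1; ring
    rw [e1, e2]; ring

lemma totalsum (j : ℤ) (hj : 1 ≤ j) :
    ∑ q ∈ Hexa j, (Nw j q) * 2 = 4*j*(j+1) * (2*j+1) := by
  have hmaps : ∀ q ∈ Hexa j, q.1 ∈ Finset.Icc (0:ℤ) (2*j) := by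
    intro q hq; rw [mem_Hexa] at hq; simp only [Finset.mem_Icc]; omega
  rw [← Finset.sum_fiberwise_of_maps_to hmaps (fun q => (Nw j q) * 2)]
  have : ∀ a ∈ Finset.Icc (0:ℤ) (2*j),
      ∑ q ∈ (Hexa j).filter (fun q => q.1 = a), (Nw j q) * 2 = 4*j*(j+1) := by
    intro a ha; simp only [Finset.mem_Icc] at ha; exact colsum j a ha.1 ha.2
  rw [Finset.sum_congr rfl this, Finset.sum_const, Int.card_Icc]
  have h' : ((2*j + 1 - 0).toNat : ℤ) = 2*j+1 := by omega
  rw [nsmul_eq_mul, h']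
  ring

lemma nat_gap {m n d1 d2 : ℕ} (h : m * d2 = n * d1) (h1 : 1 ≤ d1) (hmn : m < n) : 2 ≤ d2 := by
  rcases Nat.lt_or_ge d2 2 with hd | hd
  · interval_cases d2
    · simp at h
      rcases h with h' | h' <;> omega
    · simp at h
      have h6 : n ≤ n * d1 := Nat.le_mul_of_pos_right n (by omega)
      omega
  · exact hd

lemma gap_card (j : ℤ) (hj : 1 ≤ j) (L : Finset (ℤ×ℤ)) (f : ℤ×ℤ → ℤ) (A : ℤ)
    (hr : ∀ q ∈ L, A ≤ f q ∧ f q ≤ A + 2*j)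
    (hgap : ∀ q ∈ L, ∀ r ∈ L, q ≠ r → 2 ≤ |f q - f r|) :
    (L.card : ℤ) ≤ j + 1 := by
  have hinj : ∀ q ∈ L, ∀ r ∈ L, (f q - A)/2 = (f r - A)/2 → q = r := by
    intro q hq r hr' he
    by_contra hne
    have h2 := hgap q hq r hr' hne
    rcases le_abs.mp h2 with h | h <;> omega
  have hmaps : ∀ q ∈ L, (f q - A)/2 ∈ Finset.Icc (0:ℤ) j := by
    intro q hq
    have := hr q hq
    simp only [Finset.mem_Icc]
    omega
  have hcard := Finset.card_le_card_of_injOn _ hmaps hinj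
  rw [Int.card_Icc] at hcard
  omega

set_option maxHeartbeats 1000000 in
lemma key_s7 (j : ℤ) (hj : 1 ≤ j) (A0 A1 B : ℝ) (hA : ¬(A0 = 0 ∧ A1 = 0)) :
    ∑ q ∈ (Hexa j).filter (fun q => A0 * (q.1:ℝ) + A1 * (q.2:ℝ) = B),
      ((Nw j q : ℝ) / (2*j*(j+1))) ≤ 1 := by
  set D : ℝ := 2*(j:ℝ)*((j:ℝ)+1) with hD
  have hDpos : 0 < D := by
    have : (1:ℝ) ≤ (j:ℝ) := by exact_mod_cast hj
    nlinarith
  set L := (Hexa j).filter (fun q => A0 * (q.1:ℝ) + A1 * (q.2:ℝ) = B) with hL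
  have hLHex : L ⊆ Hexa j := Finset.filter_subset _ _
  -- helper to finish in the "all on a coordinate line" cases
  have fin1 : ∀ (P : ℤ × ℤ → Prop) (_ : DecidablePred P),
      (∑ q ∈ (Hexa j).filter (fun q => P q), (Nw j q) * 2 = 4*j*(j+1)) →
      (∀ q ∈ L, P q) →
      ∑ q ∈ L, ((Nw j q : ℝ) / D) ≤ 1 := by
    intro P _ hPsum hLP
    have hsub : L ⊆ (Hexa j).filter (fun q => P q) := by
      intro q hq
      exact Finset.mem_filter.mpr ⟨hLHex hq, hLP q hq⟩
    have h1 : ∑ q ∈ L, ((Nw j q : ℝ) / D)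
        ≤ ∑ q ∈ (Hexa j).filter (fun q => P q), ((Nw j q : ℝ) / D) := by
      apply Finset.sum_le_sum_of_subset_of_nonneg hsub
      intro q _ _
      have := Nw_nonneg j q
      positivity
    have h2 : ∑ q ∈ (Hexa j).filter (fun q => P q), ((Nw j q : ℝ) / D) = 1 := by
      rw [← Finset.sum_div]
      rw [div_eq_one_iff_eq (ne_of_gt hDpos)]
      have hcast : ((∑ q ∈ (Hexa j).filter (fun q => P q), (Nw j q) * 2 : ℤ) : ℝ)
          = ((4*j*(j+1) : ℤ) : ℝ) := by rw [hPsum]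
      push_cast at hcast
      have h3 : (∑ q ∈ (Hexa j).filter (fun q => P q), ((Nw j q : ℝ))) * 2
          = 4*(j:ℝ)*((j:ℝ)+1) := by
        rw [Finset.sum_mul]
        convert hcast using 1
      rw [hD]
      nlinarith [h3]
    linarith [h1, h2]
  by_cases hx : ∀ q ∈ L, ∀ r ∈ L, q.1 = r.1
  · rcases L.eq_empty_or_nonempty with he | ⟨q0, hq0⟩
    · rw [he]; simp
    · have hq0m := mem_Hexa.mp (hLHex hq0)
      exact fin1 (fun q => q.1 = q0.1) (by infer_instance) (colsum j q0.1 (by omega) (by omega))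
        (fun q hq => hx q hq q0 hq0)
  by_cases hy : ∀ q ∈ L, ∀ r ∈ L, q.2 = r.2
  · rcases L.eq_empty_or_nonempty with he | ⟨q0, hq0⟩
    · rw [he]; simp
    · have hq0m := mem_Hexa.mp (hLHex hq0)
      exact fin1 (fun q => q.2 = q0.2) (by infer_instance) (rowsum j q0.2 (by omega) (by omega))
        (fun q hq => hy q hq q0 hq0)
  by_cases hs : ∀ q ∈ L, ∀ r ∈ L, q.1 + q.2 = r.1 + r.2
  · rcases L.eq_empty_or_nonempty with he | ⟨q0, hq0⟩
    · rw [he]; simp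
    · have hq0m := mem_Hexa.mp (hLHex hq0)
      exact fin1 (fun q => q.1 + q.2 = q0.1 + q0.2) (by infer_instance) (diagsum j (q0.1+q0.2) (by omega) (by omega))
        (fun q hq => hs q hq q0 hq0)
  -- generic case
  push_neg at hx hy hs
  obtain ⟨p, hp, q, hq, hpq1⟩ := hx
  set u : ℤ := q.1 - p.1 with hu
  set v : ℤ := q.2 - p.2 with hv
  have hu0 : u ≠ 0 := by omega
  -- all points of L satisfy the real line equation; derive integer collinearity
  have hline : ∀ r ∈ L, A0 * (r.1:ℝ) + A1 * (r.2:ℝ) = B := by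
    intro r hr; exact (Finset.mem_filter.mp hr).2
  have hR : ∀ r ∈ L, ∀ s ∈ L, u * (r.2 - s.2) = v * (r.1 - s.1) := by
    intro r hr s hs'
    have e1 : A0 * ((q.1:ℝ) - p.1) + A1 * ((q.2:ℝ) - p.2) = 0 := by
      have t1 := hline q hq; have t2 := hline p hp; linarith
    have e2 : A0 * ((r.1:ℝ) - s.1) + A1 * ((r.2:ℝ) - s.2) = 0 := by
      have t1 := hline r hr; have t2 := hline s hs'; linarith
    have key_s7 : ((q.1:ℝ) - p.1) * ((r.2:ℝ) - s.2) = ((q.2:ℝ) - p.2) * ((r.1:ℝ) - s.1) := by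
      rcases not_and_or.mp hA with h0 | h1
      · apply mul_left_cancel₀ h0
        linear_combination ((r.2:ℝ) - s.2) * e1 - ((q.2:ℝ) - p.2) * e2
      · apply mul_left_cancel₀ h1
        linear_combination ((q.1:ℝ) - p.1) * e2 - ((r.1:ℝ) - s.1) * e1
    have : ((u * (r.2 - s.2) : ℤ) : ℝ) = ((v * (r.1 - s.1) : ℤ) : ℝ) := by
      push_cast
      rw [hu, hv]
      push_cast
      linear_combination key_s7
    exact_mod_cast this
  have hv0 : v ≠ 0 := by
    intro hv'
    obtain ⟨r, hr, s, hs', hne⟩ := hy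
    have h5 := hR r hr s hs'
    rw [hv'] at h5
    simp at h5
    rcases h5 with h | h
    · exact hu0 h
    · exact hne (by omega)
  -- distinct points differ in both coordinates
  have hdist : ∀ r ∈ L, ∀ s ∈ L, r ≠ s → r.1 ≠ s.1 ∧ r.2 ≠ s.2 := by
    intro r hr s hs' hne
    constructor
    · intro h1
      have h5 := hR r hr s hs'
      rw [h1] at h5; simp at h5
      rcases h5 with h | h
      · exact hu0 h
      · exact hne (Prod.ext h1 (by omega))
    · intro h2
      have h5 := hR r hr s hs'
      rw [h2] at h5; simp at h5
      rcases h5 with h | h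
      · first
        | exact hv0 h
        | exact hne (Prod.ext (by omega) h2)
      · first
        | exact hv0 h
        | exact hne (Prod.ext (by omega) h2)
  have hcard : (L.card : ℤ) ≤ j + 1 := by
    rcases lt_trichotomy u.natAbs v.natAbs with hc | hc | hc
    · apply gap_card j hj L Prod.snd 0
      · intro r hr
        have := mem_Hexa.mp (hLHex hr)
        constructor <;> omega
      · intro r hr s hs' hne
        have hR' := hR r hr s hs'
        have hd := hdist r hr s hs' hne
        have hnat : u.natAbs * (r.2 - s.2).natAbs = v.natAbs * (r.1 - s.1).natAbs := by
          rw [← Int.natAbs_mul, ← Int.natAbs_mul, hR']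
        have h1 : 1 ≤ (r.1 - s.1).natAbs := by omega
        have h2 := nat_gap hnat h1 hc
        rw [Int.abs_eq_natAbs]
        omega
    · rcases Int.natAbs_eq_natAbs_iff.mp hc with hc' | hc'
      · -- u = v : use sum coordinate
        apply gap_card j hj L (fun q => q.1 + q.2) j
        · intro r hr
          have := mem_Hexa.mp (hLHex hr)
          constructor <;> omega
        · intro r hr s hs' hne
          have hR' := hR r hr s hs'
          have hd := hdist r hr s hs' hne
          rw [← hc'] at hR'
          have h3 : r.2 - s.2 = r.1 - s.1 := mul_left_cancel₀ hu0 hR'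
          rw [Int.abs_eq_natAbs]
          omega
      · -- u = -v : contradiction with hs
        exfalso
        obtain ⟨r, hr, s, hs', hne⟩ := hs
        have hR' := hR r hr s hs'
        rw [hc'] at hR'
        have h5 : v * ((r.1 - s.1) + (r.2 - s.2)) = 0 := by linear_combination -hR'
        rcases mul_eq_zero.mp h5 with h | h
        · exact hv0 h
        · exact hne (by omega)
    · apply gap_card j hj L Prod.fst 0
      · intro r hr
        have := mem_Hexa.mp (hLHex hr)
        constructor <;> omega
      · intro r hr s hs' hne
        have hR' := hR r hr s hs'
        have hd := hdist r hr s hs' hne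
        have hnat : u.natAbs * (r.2 - s.2).natAbs = v.natAbs * (r.1 - s.1).natAbs := by
          rw [← Int.natAbs_mul, ← Int.natAbs_mul, hR']
        have h1 : 1 ≤ (r.2 - s.2).natAbs := by omega
        have h2 : 2 ≤ (r.1 - s.1).natAbs := by
          apply nat_gap (m := v.natAbs) (n := u.natAbs) _ h1 hc
          omega
        rw [Int.abs_eq_natAbs]
        omega
  have hbound : ∀ q' ∈ L, ((Nw j q' : ℝ) / D) ≤ 2*(j:ℝ)/D := by
    intro q' hq'
    have h1 := Nw_le j q' (hLHex hq')
    gcongr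
    exact_mod_cast h1
  have hsum := Finset.sum_le_card_nsmul L _ _ hbound
  rw [nsmul_eq_mul] at hsum
  have hcR : (L.card : ℝ) ≤ (j:ℝ) + 1 := by exact_mod_cast hcard
  have hfrac : 0 ≤ 2*(j:ℝ)/D := by positivity
  have : (L.card : ℝ) * (2*(j:ℝ)/D) ≤ ((j:ℝ)+1) * (2*(j:ℝ)/D) :=
    mul_le_mul_of_nonneg_right hcR hfrac
  have heq : ((j:ℝ)+1) * (2*(j:ℝ)/D) = 1 := by
    rw [hD]
    field_simp
  calc ∑ q ∈ L, ((Nw j q : ℝ) / D) ≤ (L.card : ℝ) * (2*(j:ℝ)/D) := hsum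
    _ ≤ ((j:ℝ)+1) * (2*(j:ℝ)/D) := this
    _ = 1 := heq

lemma lowerBound (j : ℕ) (hj : 1 ≤ j) (w : ((Fin 2 → ℝ) × ℝ) →₀ ℝ)
    (hw : IsFracCover 2 (3 * j + 1) w) : 2 * (j : ℝ) + 1 ≤ fracTotal w := by
  obtain ⟨hw0, hwne, hwcov⟩ := hw
  set J : ℤ := (j : ℤ) with hJ
  have hJ1 : 1 ≤ J := by omega
  set D : ℝ := 2*(J:ℝ)*((J:ℝ)+1) with hD
  have hDpos : 0 < D := by
    have : (1:ℝ) ≤ (J:ℝ) := by exact_mod_cast hJ1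
    nlinarith
  set Yr : ℤ × ℤ → ℝ := fun q => (Nw J q : ℝ) / D with hYr
  have hYr0 : ∀ q, 0 ≤ Yr q := by
    intro q
    have := Nw_nonneg J q
    rw [hYr]
    positivity
  set pt : ℤ × ℤ → (Fin 2 → ℤ) := fun q => ![q.1, q.2] with hpt
  have hgrid : ∀ q ∈ Hexa J, pt q ∈ TriGrid 2 (3 * j + 1) := by
    intro q hq
    rw [mem_Hexa] at hq
    constructor
    · intro i
      fin_cases i <;> simp [hpt] <;> omega
    · rw [Fin.sum_univ_two]
      simp only [hpt, Matrix.cons_val_zero, Matrix.cons_val_one, Matrix.head_cons]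
      push_cast
      omega
  -- total of the dual equals 2j+1
  have htot : ∑ q ∈ Hexa J, Yr q = 2 * (j:ℝ) + 1 := by
    have hcast : ((∑ q ∈ Hexa J, (Nw J q) * 2 : ℤ) : ℝ) = ((4*J*(J+1)*(2*J+1) : ℤ) : ℝ) := by
      rw [totalsum J hJ1]
    push_cast at hcast
    have h2 : (∑ q ∈ Hexa J, ((Nw J q : ℝ))) * 2 = 4*(J:ℝ)*((J:ℝ)+1)*(2*(J:ℝ)+1) := by
      rw [Finset.sum_mul]; convert hcast using 1
    rw [hYr, ← Finset.sum_div]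
    rw [div_eq_iff (ne_of_gt hDpos), hD]
    have hJj : ((J:ℝ)) = (j:ℝ) := by rw [hJ]; push_cast; rfl
    rw [hJj] at h2 ⊢
    nlinarith [h2]
  -- step: insert fracAt
  have hstep1 : ∑ q ∈ Hexa J, Yr q ≤ ∑ q ∈ Hexa J, Yr q * fracAt w (toReal (pt q)) := by
    apply Finset.sum_le_sum
    intro q hq
    have hcov := hwcov (pt q) (hgrid q hq)
    calc Yr q = Yr q * 1 := by ring
      _ ≤ Yr q * fracAt w (toReal (pt q)) := by
          apply mul_le_mul_of_nonneg_left hcov (hYr0 q)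
  -- swap sums
  have hswap : ∑ q ∈ Hexa J, Yr q * fracAt w (toReal (pt q))
      = ∑ H ∈ w.support, (∑ q ∈ (Hexa J).filter
          (fun q => H.1 0 * (q.1:ℝ) + H.1 1 * (q.2:ℝ) = H.2), Yr q) * w H := by
    have hthru : ∀ (H : (Fin 2 → ℝ) × ℝ) (q : ℤ × ℤ),
        (∑ i, H.1 i * (toReal (pt q)) i = H.2) ↔ (H.1 0 * (q.1:ℝ) + H.1 1 * (q.2:ℝ) = H.2) := by
      intro H q
      rw [Fin.sum_univ_two]
      simp [hpt, toReal]
    calc ∑ q ∈ Hexa J, Yr q * fracAt w (toReal (pt q))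
        = ∑ q ∈ Hexa J, ∑ H ∈ w.support,
            (if H.1 0 * (q.1:ℝ) + H.1 1 * (q.2:ℝ) = H.2 then Yr q * w H else 0) := by
          apply Finset.sum_congr rfl
          intro q _
          simp only [fracAt]
          rw [Finset.sum_filter, Finset.mul_sum]
          apply Finset.sum_congr rfl
          intro H _
          simp only [hthru]
          split_ifs <;> simp
      _ = ∑ H ∈ w.support, ∑ q ∈ Hexa J,
            (if H.1 0 * (q.1:ℝ) + H.1 1 * (q.2:ℝ) = H.2 then Yr q * w H else 0) :=
          Finset.sum_comm
      _ = ∑ H ∈ w.support, (∑ q ∈ (Hexa J).filter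
            (fun q => H.1 0 * (q.1:ℝ) + H.1 1 * (q.2:ℝ) = H.2), Yr q) * w H := by
          apply Finset.sum_congr rfl
          intro H _
          rw [Finset.sum_filter, Finset.sum_mul]
          apply Finset.sum_congr rfl
          intro q _
          split_ifs <;> simp
  have hstep2 : ∑ H ∈ w.support, (∑ q ∈ (Hexa J).filter
        (fun q => H.1 0 * (q.1:ℝ) + H.1 1 * (q.2:ℝ) = H.2), Yr q) * w H
      ≤ ∑ H ∈ w.support, w H := by
    apply Finset.sum_le_sum
    intro H hH
    have hA : ¬(H.1 0 = 0 ∧ H.1 1 = 0) := by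
      rintro ⟨h0, h1⟩
      apply hwne H hH
      funext i
      fin_cases i <;> simpa
    have hk := key_s7 J hJ1 (H.1 0) (H.1 1) H.2 hA
    calc (∑ q ∈ (Hexa J).filter
          (fun q => H.1 0 * (q.1:ℝ) + H.1 1 * (q.2:ℝ) = H.2), Yr q) * w H
        ≤ 1 * w H := by
          apply mul_le_mul_of_nonneg_right _ (hw0 H)
          exact hk
      _ = w H := by ring
  simp only [fracTotal]
  calc 2 * (j:ℝ) + 1 = ∑ q ∈ Hexa J, Yr q := htot.symm
    _ ≤ ∑ q ∈ Hexa J, Yr q * fracAt w (toReal (pt q)) := hstep1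
    _ = _ := hswap
    _ ≤ ∑ H ∈ w.support, w H := hstep2

noncomputable section UB

def ee0 : Fin 2 → ℝ := fun i => if i = 0 then 1 else 0
def ee1 : Fin 2 → ℝ := fun i => if i = 0 then 0 else 1
def ee2 : Fin 2 → ℝ := fun _ => 1

lemma ee01 : ee0 ≠ ee1 := by intro h; have := congrFun h 0; simp [ee0, ee1] at this
lemma ee02 : ee0 ≠ ee2 := by intro h; have := congrFun h 1; simp [ee0, ee2] at this
lemma ee12 : ee1 ≠ ee2 := by intro h; have := congrFun h 0; simp [ee1, ee2] at this
lemma ee0ne : ee0 ≠ 0 := by intro h; have := congrFun h 0; simp [ee0] at this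
lemma ee1ne : ee1 ≠ 0 := by intro h; have := congrFun h 1; simp [ee1] at this
lemma ee2ne : ee2 ≠ 0 := by intro h; have := congrFun h 0; simp [ee2] at this

variable (j : ℕ)

def SS : Finset ((Fin 2 → ℝ) × ℝ) :=
  ((range (2*j)).image fun (a:ℕ) => (ee0, (a:ℝ)))
  ∪ ((range (2*j)).image fun (a:ℕ) => (ee1, (a:ℝ)))
  ∪ ((range (2*j)).image fun (a:ℕ) => (ee2, (3*(j:ℝ) - (a:ℝ))))

def ff (H : (Fin 2 → ℝ) × ℝ) : ℝ :=
  (if H.1 = ee0 ∧ ∃ a : ℕ, a < 2*j ∧ (a:ℝ) = H.2 then (2*(j:ℝ) - H.2)/(3*(j:ℝ)) else 0)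
  + (if H.1 = ee1 ∧ ∃ a : ℕ, a < 2*j ∧ (a:ℝ) = H.2 then (2*(j:ℝ) - H.2)/(3*(j:ℝ)) else 0)
  + (if H.1 = ee2 ∧ ∃ a : ℕ, a < 2*j ∧ (3*(j:ℝ) - (a:ℝ)) = H.2 then (H.2 - (j:ℝ))/(3*(j:ℝ)) else 0)

lemma ff_supp : ∀ H, ff j H ≠ 0 → H ∈ SS j := by
  intro H h
  by_contra hns
  apply h
  unfold ff
  rw [if_neg, if_neg, if_neg]
  · ring
  · rintro ⟨h1, a, ha, ha2⟩
    exact hns (by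
      apply Finset.mem_union_right
      apply Finset.mem_image.mpr ⟨a, Finset.mem_range.mpr ha, by rw [← h1, ha2]⟩)
  · rintro ⟨h1, a, ha, ha2⟩
    exact hns (by
      apply Finset.mem_union_left
      apply Finset.mem_union_right
      apply Finset.mem_image.mpr ⟨a, Finset.mem_range.mpr ha, by rw [← h1, ha2]⟩)
  · rintro ⟨h1, a, ha, ha2⟩
    exact hns (by
      apply Finset.mem_union_left
      apply Finset.mem_union_left
      apply Finset.mem_image.mpr ⟨a, Finset.mem_range.mpr ha, by rw [← h1, ha2]⟩)

def ww : ((Fin 2 → ℝ) × ℝ) →₀ ℝ := Finsupp.onFinset (SS j) (ff j) (ff_supp j)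

lemma ww_apply (H : (Fin 2 → ℝ) × ℝ) : ww j H = ff j H := rfl

lemma ff_nonneg (hj : 1 ≤ j) (H : (Fin 2 → ℝ) × ℝ) : 0 ≤ ff j H := by
  unfold ff
  have hj3 : (0:ℝ) < 3*(j:ℝ) := by positivity
  have t1 : (0:ℝ) ≤ (if H.1 = ee0 ∧ ∃ a : ℕ, a < 2*j ∧ (a:ℝ) = H.2 then (2*(j:ℝ) - H.2)/(3*(j:ℝ)) else 0) := by
    split_ifs with h
    · obtain ⟨_, a, ha, ha2⟩ := h
      rw [← ha2]
      apply div_nonneg _ (le_of_lt hj3)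
      have : (a:ℝ) < 2*(j:ℝ) := by exact_mod_cast ha
      linarith
    · exact le_refl 0
  have t2 : (0:ℝ) ≤ (if H.1 = ee1 ∧ ∃ a : ℕ, a < 2*j ∧ (a:ℝ) = H.2 then (2*(j:ℝ) - H.2)/(3*(j:ℝ)) else 0) := by
    split_ifs with h
    · obtain ⟨_, a, ha, ha2⟩ := h
      rw [← ha2]
      apply div_nonneg _ (le_of_lt hj3)
      have : (a:ℝ) < 2*(j:ℝ) := by exact_mod_cast ha
      linarith
    · exact le_refl 0
  have t3 : (0:ℝ) ≤ (if H.1 = ee2 ∧ ∃ a : ℕ, a < 2*j ∧ (3*(j:ℝ) - (a:ℝ)) = H.2 then (H.2 - (j:ℝ))/(3*(j:ℝ)) else 0) := by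
    split_ifs with h
    · obtain ⟨_, a, ha, ha2⟩ := h
      rw [← ha2]
      apply div_nonneg _ (le_of_lt hj3)
      have : (a:ℝ) < 2*(j:ℝ) := by exact_mod_cast ha
      linarith
    · exact le_refl 0
  linarith

lemma ffe0 (X : ℤ) (h0 : 0 ≤ X) (h2 : X < 2*(j:ℤ)) :
    ff j (ee0, (X:ℝ)) = (2*(j:ℝ) - (X:ℝ))/(3*(j:ℝ)) := by
  have hc : ((X.toNat:ℕ):ℝ) = (X:ℝ) := by exact_mod_cast Int.toNat_of_nonneg h0
  have c1 : ((ee0, (X:ℝ)).1 = ee0 ∧ ∃ a : ℕ, a < 2*j ∧ (a:ℝ) = (ee0, (X:ℝ)).2) :=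
    ⟨rfl, X.toNat, by omega, hc⟩
  have c2 : ¬((ee0, (X:ℝ)).1 = ee1 ∧ ∃ a : ℕ, a < 2*j ∧ (a:ℝ) = (ee0, (X:ℝ)).2) := by
    rintro ⟨h, _⟩; exact ee01 h
  have c3 : ¬((ee0, (X:ℝ)).1 = ee2 ∧ ∃ a : ℕ, a < 2*j ∧ (3*(j:ℝ) - (a:ℝ)) = (ee0, (X:ℝ)).2) := by
    rintro ⟨h, _⟩; exact ee02 h
  unfold ff
  rw [if_pos c1, if_neg c2, if_neg c3]
  ring

lemma ffe1 (X : ℤ) (h0 : 0 ≤ X) (h2 : X < 2*(j:ℤ)) :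
    ff j (ee1, (X:ℝ)) = (2*(j:ℝ) - (X:ℝ))/(3*(j:ℝ)) := by
  have hc : ((X.toNat:ℕ):ℝ) = (X:ℝ) := by exact_mod_cast Int.toNat_of_nonneg h0
  have c1 : ¬((ee1, (X:ℝ)).1 = ee0 ∧ ∃ a : ℕ, a < 2*j ∧ (a:ℝ) = (ee1, (X:ℝ)).2) := by
    rintro ⟨h, _⟩; exact ee01 h.symm
  have c2 : ((ee1, (X:ℝ)).1 = ee1 ∧ ∃ a : ℕ, a < 2*j ∧ (a:ℝ) = (ee1, (X:ℝ)).2) :=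
    ⟨rfl, X.toNat, by omega, hc⟩
  have c3 : ¬((ee1, (X:ℝ)).1 = ee2 ∧ ∃ a : ℕ, a < 2*j ∧ (3*(j:ℝ) - (a:ℝ)) = (ee1, (X:ℝ)).2) := by
    rintro ⟨h, _⟩; exact ee12 h
  unfold ff
  rw [if_neg c1, if_pos c2, if_neg c3]
  ring

lemma ffe2 (s : ℤ) (h0 : (j:ℤ) < s) (h2 : s ≤ 3*(j:ℤ)) :
    ff j (ee2, (s:ℝ)) = ((s:ℝ) - (j:ℝ))/(3*(j:ℝ)) := by
  have hnn : (0:ℤ) ≤ 3*(j:ℤ) - s := by omega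
  have hc : (((3*(j:ℤ) - s).toNat:ℕ):ℝ) = 3*(j:ℝ) - (s:ℝ) := by
    have h' : ((3*(j:ℤ) - s).toNat : ℤ) = 3*(j:ℤ) - s := Int.toNat_of_nonneg hnn
    exact_mod_cast h'
  have c1 : ¬((ee2, (s:ℝ)).1 = ee0 ∧ ∃ a : ℕ, a < 2*j ∧ (a:ℝ) = (ee2, (s:ℝ)).2) := by
    rintro ⟨h, _⟩; exact ee02 h.symm
  have c2 : ¬((ee2, (s:ℝ)).1 = ee1 ∧ ∃ a : ℕ, a < 2*j ∧ (a:ℝ) = (ee2, (s:ℝ)).2) := by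
    rintro ⟨h, _⟩; exact ee12 h.symm
  have c3 : ((ee2, (s:ℝ)).1 = ee2 ∧ ∃ a : ℕ, a < 2*j ∧ (3*(j:ℝ) - (a:ℝ)) = (ee2, (s:ℝ)).2) :=
    ⟨rfl, (3*(j:ℤ) - s).toNat, by omega, by rw [hc]; ring⟩
  unfold ff
  rw [if_neg c1, if_neg c2, if_pos c3]
  ring

lemma sum_ite_cast (n : ℕ) (X : ℤ) (g : ℕ → ℝ) :
    ∑ a ∈ range n, (if (X:ℝ) = (a:ℝ) then g a else 0)
    = if 0 ≤ X ∧ X < (n:ℤ) then g X.toNat else 0 := by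
  by_cases h : 0 ≤ X ∧ X < (n:ℤ)
  · rw [if_pos h]
    have hmem : X.toNat ∈ range n := by simp only [Finset.mem_range]; omega
    rw [Finset.sum_eq_single_of_mem X.toNat hmem]
    · rw [if_pos]
      exact_mod_cast (Int.toNat_of_nonneg h.1).symm
    · intro b _ hb
      apply if_neg
      intro hc
      have : X = (b:ℤ) := by exact_mod_cast hc
      omega
  · rw [if_neg h]
    apply Finset.sum_eq_zero
    intro a ha
    apply if_neg
    intro hc
    have : X = (a:ℤ) := by exact_mod_cast hc
    simp only [Finset.mem_range] at ha
    omega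

lemma SS_disj01 : Disjoint ((range (2*j)).image fun (a:ℕ) => (ee0, (a:ℝ)))
    ((range (2*j)).image fun (a:ℕ) => (ee1, (a:ℝ))) := by
  rw [Finset.disjoint_left]
  rintro H hH0 hH1
  obtain ⟨a, _, rfl⟩ := Finset.mem_image.mp hH0
  obtain ⟨b, _, hb⟩ := Finset.mem_image.mp hH1
  exact ee01 (congrArg Prod.fst hb).symm

lemma SS_disj2 : Disjoint (((range (2*j)).image fun (a:ℕ) => (ee0, (a:ℝ)))
      ∪ ((range (2*j)).image fun (a:ℕ) => (ee1, (a:ℝ))))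
    ((range (2*j)).image fun (a:ℕ) => (ee2, (3*(j:ℝ) - (a:ℝ)))) := by
  rw [Finset.disjoint_left]
  rintro H hH0 hH1
  obtain ⟨b, _, hb⟩ := Finset.mem_image.mp hH1
  rcases Finset.mem_union.mp hH0 with h | h
  · obtain ⟨a, _, rfl⟩ := Finset.mem_image.mp h
    exact ee02 (congrArg Prod.fst hb).symm
  · obtain ⟨a, _, rfl⟩ := Finset.mem_image.mp h
    exact ee12 (congrArg Prod.fst hb).symm

lemma gauss_real (n : ℕ) : ∑ a ∈ range (2*n), (2*(n:ℝ) - (a:ℕ)) = (n:ℝ)*(2*(n:ℝ)+1) := by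
  have hz := linsum (2*n) (2*(n:ℤ)) (-1)
  have hz2 : ∑ k ∈ range (2*n), (2*(n:ℤ) + (-1) * (k:ℤ)) * 2 = (2*(n:ℤ)+1) * (2*(n:ℤ)) := by
    rw [hz]; push_cast; ring
  have hcast : ((∑ k ∈ range (2*n), (2*(n:ℤ) + (-1) * (k:ℤ)) * 2 : ℤ) : ℝ)
      = (((2*(n:ℤ)+1) * (2*(n:ℤ)) : ℤ) : ℝ) := by rw [hz2]
  push_cast at hcast
  have h3 : (∑ a ∈ range (2*n), (2*(n:ℝ) - (a:ℕ))) * 2 = (2*(n:ℝ)+1) * (2*(n:ℝ)) := by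
    rw [Finset.sum_mul]
    rw [← hcast]
    apply Finset.sum_congr rfl
    intro a _
    ring
  nlinarith [h3]

lemma ffe0n (a : ℕ) (h : a < 2*j) : ff j (ee0, (a:ℝ)) = (2*(j:ℝ) - (a:ℝ))/(3*(j:ℝ)) := by
  have := ffe0 j (a:ℤ) (by omega) (by omega)
  push_cast at this
  exact this

lemma ffe1n (a : ℕ) (h : a < 2*j) : ff j (ee1, (a:ℝ)) = (2*(j:ℝ) - (a:ℝ))/(3*(j:ℝ)) := by
  have := ffe1 j (a:ℤ) (by omega) (by omega)
  push_cast at this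
  exact this

lemma ffe2n (a : ℕ) (h : a < 2*j) :
    ff j (ee2, 3*(j:ℝ) - (a:ℝ)) = (2*(j:ℝ) - (a:ℝ))/(3*(j:ℝ)) := by
  have h2 := ffe2 j (3*(j:ℤ) - a) (by omega) (by omega)
  push_cast at h2
  rw [show 3*(j:ℝ) - (a:ℝ) - (j:ℝ) = 2*(j:ℝ) - (a:ℝ) from by ring] at h2
  exact h2

lemma inj0 : Set.InjOn (fun (a:ℕ) => ((ee0, (a:ℝ)) : (Fin 2 → ℝ) × ℝ)) (range (2*j)) := by
  intro x _ y _ h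
  have h2 : ((x:ℕ):ℝ) = ((y:ℕ):ℝ) := congrArg Prod.snd h
  exact_mod_cast h2

lemma inj1 : Set.InjOn (fun (a:ℕ) => ((ee1, (a:ℝ)) : (Fin 2 → ℝ) × ℝ)) (range (2*j)) := by
  intro x _ y _ h
  have h2 : ((x:ℕ):ℝ) = ((y:ℕ):ℝ) := congrArg Prod.snd h
  exact_mod_cast h2

lemma inj2 : Set.InjOn (fun (a:ℕ) => ((ee2, 3*(j:ℝ) - (a:ℝ)) : (Fin 2 → ℝ) × ℝ)) (range (2*j)) := by
  intro x _ y _ h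
  have h2 : 3*(j:ℝ) - ((x:ℕ):ℝ) = 3*(j:ℝ) - ((y:ℕ):ℝ) := congrArg Prod.snd h
  have h3 : ((x:ℕ):ℝ) = ((y:ℕ):ℝ) := by linarith
  exact_mod_cast h3

lemma ww_sum_SS (g : ((Fin 2 → ℝ) × ℝ) → ℝ) :
    ∑ H ∈ SS j, g H = ∑ a ∈ range (2*j), g (ee0, (a:ℝ))
      + ∑ a ∈ range (2*j), g (ee1, (a:ℝ))
      + ∑ a ∈ range (2*j), g (ee2, 3*(j:ℝ) - (a:ℝ)) := by
  unfold SS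
  rw [Finset.sum_union (SS_disj2 j), Finset.sum_union (SS_disj01 j)]
  rw [Finset.sum_image (inj0 j), Finset.sum_image (inj1 j), Finset.sum_image (inj2 j)]

lemma ww_total (hj : 1 ≤ j) : fracTotal (ww j) = 2*(j:ℝ) + 1 := by
  have hsub : (ww j).support ⊆ SS j := Finsupp.support_onFinset_subset
  have hzero : ∀ H ∈ SS j, H ∉ (ww j).support → ww j H = 0 := by
    intro H _ hH
    exact Finsupp.notMem_support_iff.mp hH
  simp only [fracTotal]
  rw [Finset.sum_subset hsub hzero, ww_sum_SS]
  have e0s : ∑ a ∈ range (2*j), ww j (ee0, (a:ℝ))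
      = ∑ a ∈ range (2*j), (2*(j:ℝ) - (a:ℝ))/(3*(j:ℝ)) := by
    apply Finset.sum_congr rfl
    intro a ha
    rw [ww_apply, ffe0n j a (Finset.mem_range.mp ha)]
  have e1s : ∑ a ∈ range (2*j), ww j (ee1, (a:ℝ))
      = ∑ a ∈ range (2*j), (2*(j:ℝ) - (a:ℝ))/(3*(j:ℝ)) := by
    apply Finset.sum_congr rfl
    intro a ha
    rw [ww_apply, ffe1n j a (Finset.mem_range.mp ha)]
  have e2s : ∑ a ∈ range (2*j), ww j (ee2, 3*(j:ℝ) - (a:ℝ))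
      = ∑ a ∈ range (2*j), (2*(j:ℝ) - (a:ℝ))/(3*(j:ℝ)) := by
    apply Finset.sum_congr rfl
    intro a ha
    rw [ww_apply, ffe2n j a (Finset.mem_range.mp ha)]
  rw [e0s, e1s, e2s, ← Finset.sum_div, gauss_real]
  have hjr : (0:ℝ) < (j:ℝ) := by exact_mod_cast hj
  field_simp
  ring

lemma one_le_three_ifs (J X Y Z : ℤ) (hj : 1 ≤ J) (hX0 : 0 ≤ X) (hY0 : 0 ≤ Y) (hZ0 : 0 ≤ Z)
    (hsum : X + Y + Z = 3*J) :
    1 ≤ (if 0 ≤ X ∧ X < 2*J then (2*(J:ℝ) - (X:ℝ))/(3*(J:ℝ)) else 0)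
      + (if 0 ≤ Y ∧ Y < 2*J then (2*(J:ℝ) - (Y:ℝ))/(3*(J:ℝ)) else 0)
      + (if 0 ≤ Z ∧ Z < 2*J then (2*(J:ℝ) - (Z:ℝ))/(3*(J:ℝ)) else 0) := by
  have hJr : (0:ℝ) < 3*(J:ℝ) := by
    have : (1:ℝ) ≤ (J:ℝ) := by exact_mod_cast hj
    linarith
  split_ifs with h1 h2 h3 h3' h2' h3'' h3'''
  · rw [← add_div, ← add_div]
    apply (one_le_div hJr).mpr
    have hz : 3*J ≤ (2*J - X) + (2*J - Y) + (2*J - Z) := by omega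
    calc (3:ℝ)*(J:ℝ) = (((3*J : ℤ)):ℝ) := by push_cast; ring
      _ ≤ (((2*J - X) + (2*J - Y) + (2*J - Z) : ℤ):ℝ) := by exact_mod_cast hz
      _ = 2*(J:ℝ) - (X:ℝ) + (2*(J:ℝ) - (Y:ℝ)) + (2*(J:ℝ) - (Z:ℝ)) := by push_cast; ring
  · rw [add_zero, ← add_div]
    apply (one_le_div hJr).mpr
    have hz : 3*J ≤ (2*J - X) + (2*J - Y) := by omega
    calc (3:ℝ)*(J:ℝ) = (((3*J : ℤ)):ℝ) := by push_cast; ring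
      _ ≤ (((2*J - X) + (2*J - Y) : ℤ):ℝ) := by exact_mod_cast hz
      _ = 2*(J:ℝ) - (X:ℝ) + (2*(J:ℝ) - (Y:ℝ)) := by push_cast; ring
  · rw [add_zero, ← add_div]
    apply (one_le_div hJr).mpr
    have hz : 3*J ≤ (2*J - X) + (2*J - Z) := by omega
    calc (3:ℝ)*(J:ℝ) = (((3*J : ℤ)):ℝ) := by push_cast; ring
      _ ≤ (((2*J - X) + (2*J - Z) : ℤ):ℝ) := by exact_mod_cast hz
      _ = 2*(J:ℝ) - (X:ℝ) + (2*(J:ℝ) - (Z:ℝ)) := by push_cast; ring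
  · exfalso; omega
  · rw [zero_add, ← add_div]
    apply (one_le_div hJr).mpr
    have hz : 3*J ≤ (2*J - Y) + (2*J - Z) := by omega
    calc (3:ℝ)*(J:ℝ) = (((3*J : ℤ)):ℝ) := by push_cast; ring
      _ ≤ (((2*J - Y) + (2*J - Z) : ℤ):ℝ) := by exact_mod_cast hz
      _ = 2*(J:ℝ) - (Y:ℝ) + (2*(J:ℝ) - (Z:ℝ)) := by push_cast; ring
  · exfalso; omega
  · exfalso; omega
  · exfalso; omega

lemma ww_cover (hj : 1 ≤ j) : ∀ x ∈ TriGrid 2 (3*j+1), 1 ≤ fracAt (ww j) (toReal x) := by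
  intro x hx
  obtain ⟨hpos, hsum⟩ := hx
  set X := x 0 with hX
  set Y := x 1 with hY
  have hX0 : 0 ≤ X := hpos 0
  have hY0 : 0 ≤ Y := hpos 1
  have hXY : X + Y ≤ 3*(j:ℤ) := by
    rw [Fin.sum_univ_two] at hsum
    push_cast at hsum
    omega
  set Z : ℤ := 3*(j:ℤ) - X - Y with hZ
  have hZ0 : 0 ≤ Z := by omega
  have hsub : (ww j).support ⊆ SS j := Finsupp.support_onFinset_subset
  set P : ((Fin 2 → ℝ) × ℝ) → Prop := fun H => ∑ i, H.1 i * (toReal x) i = H.2 with hP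
  have hstep : fracAt (ww j) (toReal x) = ∑ H ∈ (SS j).filter (fun H => P H), ww j H := by
    simp only [fracAt]
    apply Finset.sum_subset (Finset.filter_subset_filter _ hsub)
    intro H hH1 hH2
    rw [Finset.mem_filter] at hH1
    by_contra hne
    exact hH2 (Finset.mem_filter.mpr ⟨Finsupp.mem_support_iff.mpr (fun h => hne (by rw [h])), hH1.2⟩)
  rw [hstep, Finset.sum_filter, ww_sum_SS]
  have hP0 : ∀ a : ℕ, P (ee0, (a:ℝ)) ↔ ((X:ℝ) = (a:ℝ)) := by
    intro a
    rw [hP]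
    simp only [Fin.sum_univ_two]
    unfold ee0
    simp [toReal, hX]
  have hP1 : ∀ a : ℕ, P (ee1, (a:ℝ)) ↔ ((Y:ℝ) = (a:ℝ)) := by
    intro a
    rw [hP]
    simp only [Fin.sum_univ_two]
    unfold ee1
    simp [toReal, hY]
  have hP2 : ∀ a : ℕ, P (ee2, 3*(j:ℝ) - (a:ℝ)) ↔ ((Z:ℝ) = (a:ℝ)) := by
    intro a
    rw [hP]
    simp only [Fin.sum_univ_two]
    unfold ee2
    simp only [one_mul, toReal, ← hX, ← hY]
    rw [hZ]
    constructor
    · intro h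
      push_cast
      linarith
    · intro h
      push_cast at h
      linarith
  have s0 : ∑ a ∈ range (2*j), (if P (ee0, (a:ℝ)) then ww j (ee0, (a:ℝ)) else 0)
      = if 0 ≤ X ∧ X < 2*(j:ℤ) then (2*(j:ℝ) - (X:ℝ))/(3*(j:ℝ)) else 0 := by
    have hc : ∀ a ∈ range (2*j), (if P (ee0, (a:ℝ)) then ww j (ee0, (a:ℝ)) else 0)
        = (if (X:ℝ) = (a:ℝ) then (2*(j:ℝ) - (a:ℝ))/(3*(j:ℝ)) else 0) := by
      intro a ha
      rw [ww_apply]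
      by_cases h : (X:ℝ) = (a:ℝ)
      · rw [if_pos ((hP0 a).mpr h), if_pos h, ffe0n j a (Finset.mem_range.mp ha)]
      · rw [if_neg (fun hc => h ((hP0 a).mp hc)), if_neg h]
    rw [Finset.sum_congr rfl hc, sum_ite_cast (2*j) X (fun a => (2*(j:ℝ) - (a:ℝ))/(3*(j:ℝ)))]
    by_cases h : 0 ≤ X ∧ X < ((2*j : ℕ):ℤ)
    · rw [if_pos h, if_pos (by push_cast at h ⊢; exact h)]
      congr 2
      exact_mod_cast Int.toNat_of_nonneg h.1
    · rw [if_neg h, if_neg (by push_cast at h ⊢; exact h)]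
  have s1 : ∑ a ∈ range (2*j), (if P (ee1, (a:ℝ)) then ww j (ee1, (a:ℝ)) else 0)
      = if 0 ≤ Y ∧ Y < 2*(j:ℤ) then (2*(j:ℝ) - (Y:ℝ))/(3*(j:ℝ)) else 0 := by
    have hc : ∀ a ∈ range (2*j), (if P (ee1, (a:ℝ)) then ww j (ee1, (a:ℝ)) else 0)
        = (if (Y:ℝ) = (a:ℝ) then (2*(j:ℝ) - (a:ℝ))/(3*(j:ℝ)) else 0) := by
      intro a ha
      rw [ww_apply]
      by_cases h : (Y:ℝ) = (a:ℝ)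
      · rw [if_pos ((hP1 a).mpr h), if_pos h, ffe1n j a (Finset.mem_range.mp ha)]
      · rw [if_neg (fun hc => h ((hP1 a).mp hc)), if_neg h]
    rw [Finset.sum_congr rfl hc, sum_ite_cast (2*j) Y (fun a => (2*(j:ℝ) - (a:ℝ))/(3*(j:ℝ)))]
    by_cases h : 0 ≤ Y ∧ Y < ((2*j : ℕ):ℤ)
    · rw [if_pos h, if_pos (by push_cast at h ⊢; exact h)]
      congr 2
      exact_mod_cast Int.toNat_of_nonneg h.1
    · rw [if_neg h, if_neg (by push_cast at h ⊢; exact h)]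
  have s2 : ∑ a ∈ range (2*j), (if P (ee2, 3*(j:ℝ) - (a:ℝ)) then ww j (ee2, 3*(j:ℝ) - (a:ℝ)) else 0)
      = if 0 ≤ Z ∧ Z < 2*(j:ℤ) then (2*(j:ℝ) - (Z:ℝ))/(3*(j:ℝ)) else 0 := by
    have hc : ∀ a ∈ range (2*j), (if P (ee2, 3*(j:ℝ) - (a:ℝ)) then ww j (ee2, 3*(j:ℝ) - (a:ℝ)) else 0)
        = (if (Z:ℝ) = (a:ℝ) then (2*(j:ℝ) - (a:ℝ))/(3*(j:ℝ)) else 0) := by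
      intro a ha
      rw [ww_apply]
      by_cases h : (Z:ℝ) = (a:ℝ)
      · rw [if_pos ((hP2 a).mpr h), if_pos h, ffe2n j a (Finset.mem_range.mp ha)]
      · rw [if_neg (fun hc => h ((hP2 a).mp hc)), if_neg h]
    rw [Finset.sum_congr rfl hc, sum_ite_cast (2*j) Z (fun a => (2*(j:ℝ) - (a:ℝ))/(3*(j:ℝ)))]
    by_cases h : 0 ≤ Z ∧ Z < ((2*j : ℕ):ℤ)
    · rw [if_pos h, if_pos (by push_cast at h ⊢; exact h)]
      congr 2
      exact_mod_cast Int.toNat_of_nonneg h.1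
    · rw [if_neg h, if_neg (by push_cast at h ⊢; exact h)]
  rw [s0, s1, s2]
  exact one_le_three_ifs (j:ℤ) X Y Z (by exact_mod_cast hj) hX0 hY0 hZ0 (by omega)

end UB


theorem stmt7 (j : ℕ) (hj : 1 ≤ j) :
    (∃ w : ((Fin 2 → ℝ) × ℝ) →₀ ℝ,
      IsFracCover 2 (3 * j + 1) w ∧ fracTotal w = 2 * (j : ℝ) + 1) ∧
    (∀ w : ((Fin 2 → ℝ) × ℝ) →₀ ℝ,
      IsFracCover 2 (3 * j + 1) w → 2 * (j : ℝ) + 1 ≤ fracTotal w) := by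
  constructor
  · refine ⟨ww j, ⟨?_, ?_, ww_cover j hj⟩, ww_total j hj⟩
    · intro H
      rw [ww_apply]
      exact ff_nonneg j hj H
    · intro H hH
      have hS : H ∈ SS j := Finsupp.support_onFinset_subset hH
      unfold SS at hS
      rcases Finset.mem_union.mp hS with h | h
      · rcases Finset.mem_union.mp h with h' | h'
        · obtain ⟨a, _, rfl⟩ := Finset.mem_image.mp h'
          exact ee0ne
        · obtain ⟨a, _, rfl⟩ := Finset.mem_image.mp h'
          exact ee1ne
      · obtain ⟨a, _, rfl⟩ := Finset.mem_image.mp h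
        exact ee2ne
  · intro w hw
    exact lowerBound j hj w hw
end

section
/- For every integer j ≥ 1, the weight assignment on T_2(3j+1) giving the lines x = i, y = i, and x + y = 3j − i weight (2j−i)/(3j) for each i ∈ {0,…,2j−1} (and weight 0 to all other lines) is a fractional cover of total weight 2j+1. -/
lemma sum_ite_int (n : ℕ) (x : ℤ) (f : ℕ → ℝ) :
    ∑ i ∈ Finset.range n, (if x = (i : ℤ) then f i else 0)
      = if 0 ≤ x ∧ x < n then f x.toNat else 0 := by
  split_ifs with h
  · obtain ⟨h0, hn⟩ := h
    rw [Finset.sum_eq_single x.toNat]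
    · rw [if_pos (by omega)]
    · intro i _ hi
      rw [if_neg]
      intro hxi
      exact hi (by omega)
    · intro hmem
      exact absurd (Finset.mem_range.mpr (by omega)) hmem
  · apply Finset.sum_eq_zero
    intro i hi
    rw [Finset.mem_range] at hi
    rw [if_neg]
    intro hxi
    exact h ⟨by omega, by omega⟩

/-- The explicit weight assignment: for each `i ∈ {0, …, 2j-1}`, the lines `x = i`, `y = i`
and `x + y = 3j - i` each receive weight `(2j - i)/(3j)`; all other lines get weight 0.
This is a fractional cover of `T_2(3j+1)` of total weight `2j+1`: the total weight of lines
through any grid point is at least `1`, and the sum of all weights equals `2j+1`. -/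
theorem stmt8 (j : ℕ) (hj : 1 ≤ j) :
    (∀ x ∈ TriGrid 2 (3 * j + 1),
      1 ≤ ∑ i ∈ Finset.range (2 * j),
        ((if x 0 = (i : ℤ) then (2 * (j : ℝ) - i) / (3 * j) else 0) +
         (if x 1 = (i : ℤ) then (2 * (j : ℝ) - i) / (3 * j) else 0) +
         (if x 0 + x 1 = 3 * (j : ℤ) - i then (2 * (j : ℝ) - i) / (3 * j) else 0))) ∧
    (∑ i ∈ Finset.range (2 * j), 3 * ((2 * (j : ℝ) - i) / (3 * j))) = 2 * (j : ℝ) + 1 := by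
  have hj' : (1:ℝ) ≤ (j:ℝ) := by exact_mod_cast hj
  have hJ : (0:ℝ) < 3 * (j:ℝ) := by linarith
  constructor
  · intro x hx
    obtain ⟨hpos, hsum⟩ := hx
    have ha : 0 ≤ x 0 := hpos 0
    have hb : 0 ≤ x 1 := hpos 1
    rw [Fin.sum_univ_two] at hsum
    have hab : x 0 + x 1 ≤ 3 * (j:ℤ) := by push_cast at hsum; omega
    have h0c : (0:ℤ) ≤ 3*(j:ℤ) - (x 0 + x 1) := by omega
    have key : ∀ i : ℕ, (x 0 + x 1 = 3*(j:ℤ) - i) ↔ ((3*(j:ℤ) - (x 0 + x 1)) = (i:ℤ)) := by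
      intro i; omega
    simp only [key]
    rw [Finset.sum_add_distrib, Finset.sum_add_distrib,
      sum_ite_int (2*j) (x 0) (fun i => (2 * (j : ℝ) - i) / (3 * j)),
      sum_ite_int (2*j) (x 1) (fun i => (2 * (j : ℝ) - i) / (3 * j)),
      sum_ite_int (2*j) (3*(j:ℤ) - (x 0 + x 1)) (fun i => (2 * (j : ℝ) - i) / (3 * j))]
    have hA0 : (0:ℝ) ≤ ((x 0 : ℤ) : ℝ) := by exact_mod_cast ha
    have hB0 : (0:ℝ) ≤ ((x 1 : ℤ) : ℝ) := by exact_mod_cast hb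
    have hABr : ((x 0 : ℤ) : ℝ) + ((x 1 : ℤ) : ℝ) ≤ 3*(j:ℝ) := by exact_mod_cast hab
    have ca : (((x 0).toNat : ℕ) : ℝ) = ((x 0 : ℤ) : ℝ) := by
      exact_mod_cast congrArg (Int.cast : ℤ → ℝ) (Int.toNat_of_nonneg ha)
    have cb : (((x 1).toNat : ℕ) : ℝ) = ((x 1 : ℤ) : ℝ) := by
      exact_mod_cast congrArg (Int.cast : ℤ → ℝ) (Int.toNat_of_nonneg hb)
    have cc : ((((3*(j:ℤ) - (x 0 + x 1)).toNat) : ℕ) : ℝ)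
        = 3*(j:ℝ) - (((x 0 : ℤ) : ℝ) + ((x 1 : ℤ) : ℝ)) := by
      have h := congrArg (Int.cast : ℤ → ℝ) (Int.toNat_of_nonneg h0c)
      push_cast at h
      linarith
    split_ifs with h1 h2 h3 h3 h2 h3 h3
    · -- all three
      simp only [ca, cb, cc]
      rw [← add_div, ← add_div, le_div_iff₀ hJ]
      ring_nf
      linarith
    · -- first two, not mid: a+b ≤ j
      have hsm : ((x 0 : ℤ) : ℝ) + ((x 1 : ℤ) : ℝ) ≤ (j:ℝ) := by
        have : x 0 + x 1 ≤ (j:ℤ) := by omega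
        exact_mod_cast this
      simp only [ca, cb, add_zero]
      rw [← add_div, le_div_iff₀ hJ]
      linarith
    · -- first and third: b ≥ 2j
      have hbr : 2*(j:ℝ) ≤ ((x 1 : ℤ) : ℝ) := by
        have : 2*(j:ℤ) ≤ x 1 := by omega
        exact_mod_cast this
      simp only [ca, cc, add_zero, zero_add]
      rw [← add_div, le_div_iff₀ hJ]
      linarith
    · exfalso; omega
    · -- second and third: a ≥ 2j
      have har : 2*(j:ℝ) ≤ ((x 0 : ℤ) : ℝ) := by
        have : 2*(j:ℤ) ≤ x 0 := by omega
        exact_mod_cast this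
      simp only [cb, cc, add_zero, zero_add]
      rw [← add_div, le_div_iff₀ hJ]
      linarith
    · exfalso; omega
    · exfalso; omega
    · exfalso; omega
  · have hJ0 : (j:ℝ) ≠ 0 := by linarith
    have h1le : 1 ≤ 2*j := by omega
    have h2 := Finset.sum_range_id_mul_two (2*j)
    have hgauss : (∑ i ∈ Finset.range (2*j), (i:ℝ)) * 2 = (2*(j:ℝ)) * (2*(j:ℝ) - 1) := by
      have h := congrArg (Nat.cast : ℕ → ℝ) h2
      push_cast [Nat.cast_sub h1le] at h
      linarith
    calc (∑ i ∈ Finset.range (2*j), 3 * ((2 * (j : ℝ) - i) / (3 * j)))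
        = ∑ i ∈ Finset.range (2*j), (2 - (i:ℝ)/j) := by
          apply Finset.sum_congr rfl
          intro i _
          field_simp
      _ = 2*(2*(j:ℝ)) - (∑ i ∈ Finset.range (2*j), (i:ℝ))/j := by
          rw [Finset.sum_sub_distrib, Finset.sum_const, Finset.card_range, ← Finset.sum_div]
          ring_nf
      _ = 2 * (j:ℝ) + 1 := by
          field_simp
          nlinarith [hgauss]
end
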